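/- arXiv:2011.02668 — 5 statements merged into one kernel-verified Lean document; each statement's English description precedes it below -/
import Mathlib

section
/- Let n ≥ 5 be an odd integer and let j, k be integers with 1 ≤ j < k ≤ (n−1)/2. Then the ratio sin(jπ/n)/sin(kπ/n) is irrational. -/
open Real Polynomial
set_option maxHeartbeats 1000000

lemma aux_two_sin_I (x : ℝ) :
    Complex.exp ((x : ℝ) * Complex.I) - Complex.exp ((-x : ℝ) * Complex.I)
      = 2 * Real.sin x * Complex.I := by
  rw [Complex.exp_mul_I, Complex.exp_mul_I, Complex.ofReal_neg, Complex.cos_neg,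
    Complex.sin_neg, ← Complex.ofReal_sin]
  ring

lemma aux_exp_diff (x y : ℝ) :
    Complex.exp (((x + y : ℝ)) * Complex.I) - Complex.exp (((y - x : ℝ)) * Complex.I)
      = 2 * Real.sin x * Complex.I * Complex.exp ((y : ℝ) * Complex.I) := by
  have e1 : ((x + y : ℝ) : ℂ) * Complex.I = (x : ℝ) * Complex.I + (y : ℝ) * Complex.I := by
    push_cast; ring
  have e2 : ((y - x : ℝ) : ℂ) * Complex.I = (-x : ℝ) * Complex.I + (y : ℝ) * Complex.I := by
    push_cast; ring
  rw [e1, e2, Complex.exp_add, Complex.exp_add, ← sub_mul, aux_two_sin_I]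

lemma aux_galois (n j k : ℕ) (hn : 0 < n) (hjk : j ≤ k) (p q : ℤ)
    (h : (q : ℝ) * Real.sin (j * Real.pi / n) = p * Real.sin (k * Real.pi / n)) :
    ∀ t : ℕ, t.Coprime (2 * n) →
      (q : ℝ) * Real.sin ((t * j) * Real.pi / n) = (p : ℝ) * Real.sin ((t * k) * Real.pi / n) := by
  have h2n : (2 * n : ℕ) ≠ 0 := by omega
  have h2npos : 0 < 2 * n := Nat.pos_of_ne_zero h2n
  set ζ : ℂ := Complex.exp (2 * Real.pi * Complex.I / ((2 * n : ℕ) : ℂ)) with hζdef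
  have hζ : IsPrimitiveRoot ζ (2 * n) := Complex.isPrimitiveRoot_exp (2 * n) h2n
  have hpow : ∀ m : ℕ, ζ ^ m = Complex.exp (((m * Real.pi / n : ℝ)) * Complex.I) := by
    intro m
    rw [hζdef, ← Complex.exp_nat_mul]
    congr 1
    have hn' : (n : ℂ) ≠ 0 := Nat.cast_ne_zero.mpr hn.ne'
    push_cast
    field_simp
  set f : ℚ[X] := C (q : ℚ) * (X ^ (j + k) - X ^ (k - j)) - C (p : ℚ) * (X ^ (2 * k) - 1)
    with hfdef
  have hcomp : ∀ t : ℕ, Polynomial.aeval (ζ ^ t) f =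
      (((q : ℝ) * Real.sin ((t * j) * Real.pi / n)
        - (p : ℝ) * Real.sin ((t * k) * Real.pi / n) : ℝ) : ℂ)
        * (2 * Complex.I * Complex.exp (((t * k) * Real.pi / n : ℝ) * Complex.I)) := by
    intro t
    set x : ℝ := (t * j) * Real.pi / n with hx
    set y : ℝ := (t * k) * Real.pi / n with hy
    have E1 : (ζ ^ t) ^ (j + k) - (ζ ^ t) ^ (k - j)
        = 2 * Real.sin x * Complex.I * Complex.exp ((y : ℝ) * Complex.I) := by
      have e1 : (ζ ^ t) ^ (j + k) = Complex.exp (((x + y : ℝ)) * Complex.I) := by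
        rw [← pow_mul, hpow]; congr 2; rw [hx, hy]; push_cast; ring
      have e2 : (ζ ^ t) ^ (k - j) = Complex.exp (((y - x : ℝ)) * Complex.I) := by
        rw [← pow_mul, hpow]; congr 2
        rw [Nat.mul_sub, Nat.cast_sub (Nat.mul_le_mul_left t hjk), hx, hy]
        push_cast; ring
      rw [e1, e2, aux_exp_diff]
    have E2 : (ζ ^ t) ^ (2 * k) - 1
        = 2 * Real.sin y * Complex.I * Complex.exp ((y : ℝ) * Complex.I) := by
      have e3 : (ζ ^ t) ^ (2 * k) = Complex.exp (((y + y : ℝ)) * Complex.I) := by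
        rw [← pow_mul, hpow]; congr 2; rw [hy]; push_cast; ring
      have h0 := aux_exp_diff y y
      rw [sub_self, Complex.ofReal_zero, zero_mul, Complex.exp_zero] at h0
      rw [e3, h0]
    rw [hfdef]
    simp only [map_sub, map_mul, map_pow, map_one, aeval_X, aeval_C]
    rw [E1, E2, map_intCast, map_intCast]
    push_cast
    ring
  have hf0 : Polynomial.aeval ζ f = 0 := by
    have h1 := hcomp 1
    rw [pow_one] at h1
    rw [h1]
    apply mul_eq_zero_of_left
    rw [Complex.ofReal_eq_zero]
    push_cast
    simp only [one_mul]
    linarith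
  have hdvd : cyclotomic (2 * n) ℚ ∣ f := by
    rw [cyclotomic_eq_minpoly_rat hζ h2npos]
    exact minpoly.dvd ℚ ζ hf0
  intro t ht
  have hξ : IsPrimitiveRoot (ζ ^ t) (2 * n) := hζ.pow_of_coprime t ht
  have hroot : Polynomial.aeval (ζ ^ t) (cyclotomic (2 * n) ℚ) = 0 := by
    have hr := hξ.isRoot_cyclotomic h2npos
    rw [aeval_def, ← eval_map, map_cyclotomic]
    exact hr
  obtain ⟨g, hg⟩ := hdvd
  have hzero : Polynomial.aeval (ζ ^ t) f = 0 := by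
    rw [hg, map_mul, hroot, zero_mul]
  rw [hcomp t] at hzero
  have hne : (2 * Complex.I * Complex.exp (((t * k) * Real.pi / n : ℝ) * Complex.I)) ≠ 0 :=
    mul_ne_zero (mul_ne_zero two_ne_zero Complex.I_ne_zero) (Complex.exp_ne_zero _)
  have hz := (mul_eq_zero.mp hzero).resolve_right hne
  rw [Complex.ofReal_eq_zero] at hz
  linarith

lemma aux_abs_sin_mod (n : ℕ) (hn : 0 < n) (a : ℕ) :
    |Real.sin (a * Real.pi / n)| = |Real.sin ((a % n : ℕ) * Real.pi / n)| := by
  conv_lhs => rw [← Nat.mod_add_div a n]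
  have : ((a % n + n * (a / n) : ℕ) : ℝ) * Real.pi / n
      = (a % n : ℕ) * Real.pi / n + (a / n : ℕ) * Real.pi := by
    have : (n:ℝ) ≠ 0 := Nat.cast_ne_zero.mpr hn.ne'
    push_cast
    field_simp
  rw [this, Real.sin_add_nat_mul_pi, abs_mul, abs_pow, abs_neg, abs_one, one_pow, one_mul]

lemma aux_abs_sin_modeq (n : ℕ) (hn : 0 < n) {a b : ℕ} (h : a ≡ b [MOD n]) :
    |Real.sin (a * Real.pi / n)| = |Real.sin (b * Real.pi / n)| := by
  rw [aux_abs_sin_mod n hn a, aux_abs_sin_mod n hn b, h]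

lemma aux_sin_le_sin {x y : ℝ} (hx : 0 ≤ x) (hxy : x ≤ y) (hy : y ≤ Real.pi - x) :
    Real.sin x ≤ Real.sin y := by
  have h := Real.sin_sub_sin y x
  have h1 : 0 ≤ Real.sin ((y - x)/2) :=
    Real.sin_nonneg_of_nonneg_of_le_pi (by linarith) (by nlinarith [Real.pi_pos])
  have h2 : 0 ≤ Real.cos ((y + x)/2) :=
    Real.cos_nonneg_of_mem_Icc ⟨by nlinarith [Real.pi_pos], by linarith⟩
  nlinarith

lemma aux_lift (n n' : ℕ) (hn : 0 < n) (h : n' ∣ n) (a : ℕ) (ha : a.Coprime n') :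
    ∃ t : ℕ, t.Coprime n ∧ (t : ZMod n') = (a : ZMod n') := by
  haveI : NeZero n := ⟨hn.ne'⟩
  obtain ⟨u, hu⟩ := ZMod.unitsMap_surjective h (ZMod.unitOfCoprime a ha)
  refine ⟨(u : ZMod n).val, ZMod.val_coe_unit_coprime u, ?_⟩
  have h1 : (((u : ZMod n).val : ℕ) : ZMod n') = ZMod.castHom h (ZMod n') (u : ZMod n) := by
    rw [ZMod.natCast_val, ZMod.castHom_apply]
  rw [h1]
  have h2 := congrArg (Units.val) hu
  simpa [ZMod.unitsMap_def, ZMod.coe_unitOfCoprime] using h2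

lemma aux_select (n m b : ℕ) (hn : 0 < n) (hm : 0 < m) (hb : b.Coprime (n / Nat.gcd m n)) :
    ∃ t : ℕ, t.Coprime n ∧ t * m ≡ Nat.gcd m n * b [MOD n] := by
  set g := Nat.gcd m n with hg
  have hg0 : 0 < g := Nat.gcd_pos_of_pos_left n hm
  set n' := n / g with hn'
  set m' := m / g with hm'
  have hgn : g ∣ n := Nat.gcd_dvd_right m n
  have hgm : g ∣ m := Nat.gcd_dvd_left m n
  have hnn' : n = g * n' := (Nat.mul_div_cancel' hgn).symm
  have hmm' : m = g * m' := (Nat.mul_div_cancel' hgm).symm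
  have hn'0 : 0 < n' := Nat.div_pos (Nat.le_of_dvd hn hgn) hg0
  haveI : NeZero n' := ⟨hn'0.ne'⟩
  have hcop : m'.Coprime n' := Nat.coprime_div_gcd_div_gcd hg0
  set u : (ZMod n')ˣ := ZMod.unitOfCoprime m' hcop with hu
  set c : (ZMod n')ˣ := ZMod.unitOfCoprime b hb * u⁻¹ with hc
  have hcv : ((c : ZMod n').val).Coprime n' := ZMod.val_coe_unit_coprime c
  obtain ⟨t, ht, htc⟩ := aux_lift n n' hn (Nat.div_dvd_of_dvd hgn) _ hcv
  refine ⟨t, ht, ?_⟩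
  have hcast : (((c : ZMod n').val : ℕ) : ZMod n') = (c : ZMod n') := by
    simp [ZMod.natCast_val, ZMod.cast_id]
  have key : ((t * m' : ℕ) : ZMod n') = ((b : ℕ) : ZMod n') := by
    push_cast
    rw [htc, hcast, hc]
    have : ((m' : ℕ) : ZMod n') = (u : ZMod n') := by simp [hu, ZMod.coe_unitOfCoprime]
    rw [this]
    push_cast
    rw [mul_assoc, Units.inv_mul]
    simp [ZMod.coe_unitOfCoprime]
  have hmod : t * m' ≡ b [MOD n'] := (ZMod.natCast_eq_natCast_iff _ _ _).mp key
  have := hmod.mul_left' (c := g)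
  rw [← hnn'] at this
  calc t * m = g * (t * m') := by rw [hmm']; ring
    _ ≡ g * b [MOD n] := this

lemma aux_angle_le (n a b : ℕ) (hn : 0 < n) (h : a + b ≤ n) :
    (b : ℝ) * Real.pi / n ≤ Real.pi - (a : ℝ) * Real.pi / n := by
  have hn' : (0:ℝ) < n := by exact_mod_cast hn
  have h2 : ((a:ℝ) + b) * Real.pi / n ≤ (n:ℝ) * Real.pi / n := by
    gcongr
    exact_mod_cast h
  have h3 : (n:ℝ) * Real.pi / n = Real.pi := by field_simp
  have h4 : ((a:ℝ) + b) * Real.pi / n = (a:ℝ) * Real.pi / n + (b:ℝ) * Real.pi / n := by ring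
  linarith

lemma aux_angle_half (n m : ℕ) (hn : 0 < n) (h : 2 * m ≤ n) :
    (m : ℝ) * Real.pi / n ≤ Real.pi / 2 := by
  have hn' : (0:ℝ) < n := by exact_mod_cast hn
  rw [div_le_div_iff₀ hn' two_pos]
  have : (2:ℝ) * m ≤ (n:ℝ) := by exact_mod_cast h
  nlinarith [Real.pi_pos]

lemma aux_sin_pos (n m : ℕ) (h1 : 1 ≤ m) (h2 : m < n) : 0 < Real.sin ((m:ℝ) * Real.pi / n) := by
  have hn : 0 < n := lt_of_le_of_lt (Nat.zero_le m) h2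
  have hn' : (0:ℝ) < n := by exact_mod_cast hn
  apply Real.sin_pos_of_pos_of_lt_pi
  · have : (0:ℝ) < (m:ℝ) := by exact_mod_cast h1
    positivity
  · rw [div_lt_iff₀ hn']
    have hmn : (m:ℝ) < n := by exact_mod_cast h2
    nlinarith [Real.pi_pos]

lemma aux_sin_nonneg (n m : ℕ) (hn : 0 < n) (h2 : m ≤ n) : 0 ≤ Real.sin ((m:ℝ) * Real.pi / n) := by
  have hn' : (0:ℝ) < n := by exact_mod_cast hn
  apply Real.sin_nonneg_of_nonneg_of_le_pi
  · positivity
  · have := aux_angle_le n 0 m hn (by omega)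
    simpa using this

lemma aux_modeq_shift (n t m : ℕ) : (t + n) * m ≡ t * m [MOD n] := by
  have h : (t + n) * m = t * m + m * n := by ring
  rw [h]
  show (t * m + m * n) % n = (t * m) % n
  exact Nat.add_mul_mod_self_right _ _ _

lemma aux_habs (n j k : ℕ) (hn : 0 < n) (hodd : Odd n) (hjk : j ≤ k) (p q : ℤ)
    (hp : 0 ≤ p) (hq : 0 ≤ q)
    (h : (q : ℝ) * Real.sin (j * Real.pi / n) = p * Real.sin (k * Real.pi / n)) :
    ∀ t : ℕ, t.Coprime n →
      (q : ℝ) * |Real.sin (((t * j : ℕ) : ℝ) * Real.pi / n)|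
        = (p : ℝ) * |Real.sin (((t * k : ℕ) : ℝ) * Real.pi / n)| := by
  have hG := aux_galois n j k hn hjk p q h
  intro t ht
  -- choose an odd representative
  obtain ⟨t', ht'o, ht'c, ht'j, ht'k⟩ :
      ∃ t' : ℕ, Odd t' ∧ t'.Coprime n ∧ t' * j ≡ t * j [MOD n] ∧ t' * k ≡ t * k [MOD n] := by
    rcases Nat.even_or_odd t with he | ho
    · exact ⟨t + n, he.add_odd hodd, Nat.coprime_add_self_left.mpr ht,
        aux_modeq_shift n t j, aux_modeq_shift n t k⟩
    · exact ⟨t, ho, ht, Nat.ModEq.refl _, Nat.ModEq.refl _⟩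
  have hc2 : t'.Coprime (2 * n) := Nat.Coprime.mul_right ht'o.coprime_two_right ht'c
  have heq := hG t' hc2
  have habs := congrArg abs heq
  rw [abs_mul, abs_mul, abs_of_nonneg (show (0:ℝ) ≤ (q:ℤ) by exact_mod_cast hq),
    abs_of_nonneg (show (0:ℝ) ≤ (p:ℤ) by exact_mod_cast hp)] at habs
  have e1 := aux_abs_sin_modeq n hn ht'j
  have e2 := aux_abs_sin_modeq n hn ht'k
  push_cast at e1 e2
  rw [e1, e2] at habs
  push_cast
  exact habs

lemma aux_angle_mono (n a b : ℕ) (hn : 0 < n) (h : a ≤ b) :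
    (a : ℝ) * Real.pi / n ≤ (b : ℝ) * Real.pi / n := by
  have hn' : (0:ℝ) < n := by exact_mod_cast hn
  gcongr


lemma aux_sin_reflect (n d : ℕ) (hn : 0 < n) (hd : d ≤ n) :
    Real.sin (((n - d : ℕ) : ℝ) * Real.pi / n) = Real.sin ((d : ℝ) * Real.pi / n) := by
  have hn' : (0:ℝ) < n := by exact_mod_cast hn
  rw [Nat.cast_sub hd]
  have : ((n : ℝ) - d) * Real.pi / n = Real.pi - (d : ℝ) * Real.pi / n := by
    field_simp
  rw [this, Real.sin_pi_sub]

/-- For odd `n ≥ 5` and integers `1 ≤ j < k ≤ (n-1)/2`, the ratio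
`sin(jπ/n)/sin(kπ/n)` is irrational. -/
theorem sine_ratio_irrational_odd (n : ℕ) (hn : 5 ≤ n) (hodd : Odd n)
    (j k : ℕ) (hj : 1 ≤ j) (hjk : j < k) (hk : k ≤ (n - 1) / 2) :
    Irrational (Real.sin (j * Real.pi / n) / Real.sin (k * Real.pi / n)) := by
  rintro ⟨r, hr⟩
  have hn0 : 0 < n := by omega
  obtain ⟨w, hw⟩ := hodd
  have h2k : 2 * k + 1 ≤ n := by omega
  have hkn : k < n := by omega
  have hjn : j < n := by omega
  have hn' : (0:ℝ) < n := by exact_mod_cast hn0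
  have hsjpos : 0 < Real.sin (j * Real.pi / n) := aux_sin_pos n j hj hjn
  have hskpos : 0 < Real.sin (k * Real.pi / n) := aux_sin_pos n k (by omega) hkn
  have hjkR : (j:ℝ) * Real.pi / n < (k:ℝ) * Real.pi / n := by
    have h1 : ((k:ℝ) - j) * (Real.pi / n) > 0 := by
      have : (0:ℝ) < (k:ℝ) - j := by
        have : (j:ℝ) < k := by exact_mod_cast hjk
        linarith
      positivity
    have h2 : ((k:ℝ) - j) * (Real.pi / n) = (k:ℝ) * Real.pi / n - (j:ℝ) * Real.pi / n := by
      ring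
    linarith
  have hlt : Real.sin (j * Real.pi / n) < Real.sin (k * Real.pi / n) := by
    apply Real.strictMonoOn_sin _ _ hjkR
    · constructor
      · have : (0:ℝ) ≤ (j:ℝ) * Real.pi / n := by positivity
        nlinarith [Real.pi_pos]
      · exact aux_angle_half n j hn0 (by omega)
    · constructor
      · have : (0:ℝ) ≤ (k:ℝ) * Real.pi / n := by positivity
        nlinarith [Real.pi_pos]
      · exact aux_angle_half n k hn0 (by omega)
  have hrpos : 0 < r := by
    have h0 : (0:ℝ) < (r:ℝ) := by rw [hr]; positivity
    exact_mod_cast h0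
  have hrlt1 : r < 1 := by
    have h0 : (r:ℝ) < 1 := by rw [hr, div_lt_one hskpos]; exact hlt
    exact_mod_cast h0
  set p : ℤ := r.num with hpdef
  set q : ℤ := (r.den : ℤ) with hqdef
  have hp0 : 0 < p := Rat.num_pos.mpr hrpos
  have hpq : p < q := by exact_mod_cast Rat.lt_one_iff_num_lt_denom.mpr hrlt1
  have hq0 : 0 < q := lt_trans hp0 hpq
  have hbase : (q:ℝ) * Real.sin (j * Real.pi / n) = (p:ℝ) * Real.sin (k * Real.pi / n) := by
    have hq' : ((q:ℤ):ℝ) ≠ 0 := by positivity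
    have hrd : Real.sin (j * Real.pi / n) / Real.sin (k * Real.pi / n) = (p:ℝ) / (q:ℝ) := by
      rw [← hr, Rat.cast_def]
      push_cast
      rfl
    rw [div_eq_div_iff hskpos.ne' hq'] at hrd
    linarith
  have habs := aux_habs n j k hn0 ⟨w, hw⟩ hjk.le p q hp0.le hq0.le hbase
  have hpR : (0:ℝ) < (p:ℝ) := by exact_mod_cast hp0
  have hpqR : (p:ℝ) < (q:ℝ) := by exact_mod_cast hpq
  set gj := Nat.gcd j n with hgjdef
  set gk := Nat.gcd k n with hgkdef
  have hgj_dvd_j : gj ∣ j := Nat.gcd_dvd_left _ _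
  have hgj_dvd_n : gj ∣ n := Nat.gcd_dvd_right _ _
  have hgk_dvd_k : gk ∣ k := Nat.gcd_dvd_left _ _
  have hgk_dvd_n : gk ∣ n := Nat.gcd_dvd_right _ _
  have hgj_pos : 0 < gj := Nat.gcd_pos_of_pos_left _ (by omega)
  have hgk_pos : 0 < gk := Nat.gcd_pos_of_pos_left _ (by omega)
  have hgj_le : gj ≤ j := Nat.le_of_dvd (by omega) hgj_dvd_j
  have hgk_le : gk ≤ k := Nat.le_of_dvd (by omega) hgk_dvd_k
  rcases le_or_gt gk gj with hG | hG
  · -- easy case : make t*k ≡ gk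
    obtain ⟨t, ht, hmod⟩ := aux_select n k 1 hn0 (by omega) (Nat.coprime_one_left _)
    rw [Nat.mul_one] at hmod
    have h1 := habs t ht
    have e2 : |Real.sin (((t * k : ℕ) : ℝ) * Real.pi / n)|
        = Real.sin ((gk : ℝ) * Real.pi / n) := by
      rw [aux_abs_sin_modeq n hn0 hmod]
      exact abs_of_nonneg (aux_sin_nonneg n gk hn0 (by omega))
    set d := (t * j) % n with hddef
    have hdj : gj ∣ d := (Nat.dvd_mod_iff hgj_dvd_n).mpr (Dvd.dvd.mul_left hgj_dvd_j t)
    have hd0 : d ≠ 0 := by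
      intro h0
      have hdvd : n ∣ t * j := Nat.dvd_of_mod_eq_zero h0
      have : n ∣ j := (Nat.Coprime.symm ht).dvd_of_dvd_mul_left hdvd
      have := Nat.le_of_dvd (by omega) this
      omega
    have hdlt : d < n := Nat.mod_lt _ hn0
    have hd_ge : gj ≤ d := Nat.le_of_dvd (Nat.pos_of_ne_zero hd0) hdj
    have hd_le : d ≤ n - gj := by
      have h5 : gj ∣ n - d := Nat.dvd_sub hgj_dvd_n hdj
      have h6 : 0 < n - d := by omega
      have := Nat.le_of_dvd h6 h5
      omega
    have e1 : |Real.sin (((t * j : ℕ) : ℝ) * Real.pi / n)|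
        = Real.sin ((d : ℝ) * Real.pi / n) := by
      rw [aux_abs_sin_mod n hn0, ← hddef]
      exact abs_of_nonneg (aux_sin_nonneg n d hn0 (by omega))
    rw [e1, e2] at h1
    have hsin_gk_pos : 0 < Real.sin ((gk:ℝ) * Real.pi / n) :=
      aux_sin_pos n gk hgk_pos (by omega)
    have hmono : Real.sin ((gk:ℝ) * Real.pi / n) ≤ Real.sin ((d:ℝ) * Real.pi / n) := by
      apply aux_sin_le_sin (by positivity) (aux_angle_mono n gk d hn0 (by omega))
      exact aux_angle_le n gk d hn0 (by omega)
    have c1 : (q:ℝ) * Real.sin ((gk:ℝ) * Real.pi / n) ≤ (q:ℝ) * Real.sin ((d:ℝ) * Real.pi / n) :=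
      mul_le_mul_of_nonneg_left hmono (by linarith)
    have c2 : (p:ℝ) * Real.sin ((gk:ℝ) * Real.pi / n) < (q:ℝ) * Real.sin ((gk:ℝ) * Real.pi / n) :=
      mul_lt_mul_of_pos_right hpqR hsin_gk_pos
    linarith
  · -- hard case : gj < gk, make t*j land near n/2
    set n' := n / gj with hn'def
    have hn'eq : n = gj * n' := (Nat.mul_div_cancel' hgj_dvd_n).symm
    have hn'pos : 0 < n' := by
      rcases Nat.eq_zero_or_pos n' with h0 | h0
      · rw [h0, Nat.mul_zero] at hn'eq; omega
      · exact h0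
    have hn'odd : Odd n' := by
      rcases Nat.even_or_odd n' with he | ho
      · exfalso
        have : Even n := hn'eq ▸ (Nat.even_mul.mpr (Or.inr he))
        obtain ⟨u, hu⟩ := this
        omega
      · exact ho
    have hn'gt1 : 1 < n' := by
      by_contra hcon
      have hne : n' = 1 := by omega
      rw [hne, Nat.mul_one] at hn'eq
      omega
    obtain ⟨w', hw'⟩ := hn'odd
    have hb_pos : 0 < w' := by omega
    have hb_cop : w'.Coprime n' := by
      have hd1 : Nat.gcd w' n' ∣ w' := Nat.gcd_dvd_left _ _
      have hd2 : Nat.gcd w' n' ∣ n' := Nat.gcd_dvd_right _ _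
      have hd3 : Nat.gcd w' n' ∣ 2 * w' := Dvd.dvd.mul_left hd1 2
      have hd4 : Nat.gcd w' n' ∣ n' - 2 * w' := Nat.dvd_sub hd2 hd3
      have h5 : n' - 2 * w' = 1 := by omega
      rw [h5] at hd4
      exact Nat.dvd_one.mp hd4
    obtain ⟨t, ht, hmod⟩ := aux_select n j w' hn0 (by omega) (by rw [← hgjdef, ← hn'def]; exact hb_cop)
    set A := gj * w' with hAdef
    have hA2 : 2 * A + gj = n := by rw [hn'eq, hw', hAdef]; ring
    have hApos : 0 < A := by positivity
    have hAlt : A < n := by omega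
    have h1 := habs t ht
    have e1 : |Real.sin (((t * j : ℕ) : ℝ) * Real.pi / n)|
        = Real.sin ((A : ℝ) * Real.pi / n) := by
      rw [aux_abs_sin_modeq n hn0 hmod]
      exact abs_of_nonneg (aux_sin_nonneg n A hn0 (by omega))
    set d := (t * k) % n with hddef
    have hdk : gk ∣ d := (Nat.dvd_mod_iff hgk_dvd_n).mpr (Dvd.dvd.mul_left hgk_dvd_k t)
    have hd0 : d ≠ 0 := by
      intro h0
      have hdvd : n ∣ t * k := Nat.dvd_of_mod_eq_zero h0
      have : n ∣ k := (Nat.Coprime.symm ht).dvd_of_dvd_mul_left hdvd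
      have := Nat.le_of_dvd (by omega) this
      omega
    have hdlt : d < n := Nat.mod_lt _ hn0
    set e := min d (n - d) with hedef
    have he_cases : e = d ∨ e = n - d := by omega
    have he_dvd : gk ∣ e := by
      rcases he_cases with h | h
      · rw [h]; exact hdk
      · rw [h]; exact Nat.dvd_sub hgk_dvd_n hdk
    have he_pos : 0 < e := by omega
    have he2 : 2 * e ≤ n - gk := by
      have h2e : 2 * e < n := by omega
      have hdd : gk ∣ n - 2 * e := Nat.dvd_sub hgk_dvd_n (Dvd.dvd.mul_left he_dvd 2)
      have := Nat.le_of_dvd (by omega) hdd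
      omega
    have heA : e < A := by omega
    have e2 : |Real.sin (((t * k : ℕ) : ℝ) * Real.pi / n)|
        = Real.sin ((e : ℝ) * Real.pi / n) := by
      rw [aux_abs_sin_mod n hn0, ← hddef]
      rcases he_cases with h | h
      · rw [h]
        exact abs_of_nonneg (aux_sin_nonneg n d hn0 (by omega))
      · rw [h, aux_sin_reflect n d hn0 hdlt.le]
        exact abs_of_nonneg (aux_sin_nonneg n d hn0 (by omega))
    rw [e1, e2] at h1
    have hsinA : 0 < Real.sin ((A:ℝ) * Real.pi / n) := aux_sin_pos n A (by omega) (by omega)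
    have hmono : Real.sin ((e:ℝ) * Real.pi / n) ≤ Real.sin ((A:ℝ) * Real.pi / n) := by
      apply aux_sin_le_sin (by positivity) (aux_angle_mono n e A hn0 (by omega))
      exact aux_angle_le n e A hn0 (by omega)
    have c1 : (p:ℝ) * Real.sin ((e:ℝ) * Real.pi / n) ≤ (p:ℝ) * Real.sin ((A:ℝ) * Real.pi / n) :=
      mul_le_mul_of_nonneg_left hmono (by linarith)
    have c2 : (p:ℝ) * Real.sin ((A:ℝ) * Real.pi / n) < (q:ℝ) * Real.sin ((A:ℝ) * Real.pi / n) :=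
      mul_lt_mul_of_pos_right hpqR hsinA
    linarith
end

section
/- Let n ≥ 8 be an even integer and let j, k be integers with 0 ≤ j < k and 2k+1 ≤ n/2. Then sin((2j+1)π/n)/sin((2k+1)π/n) is rational if and only if n = 12j+6 and k = 3j+1. -/
open Real Polynomial

/-- distance from `c` to the nearest multiple of `n`, as a natural number -/
def wd (n c : ℕ) : ℕ := min (c % n) (n - c % n)

lemma wd_le (n c : ℕ) (hn : 0 < n) : 2 * wd n c ≤ n := by
  have := Nat.mod_lt c hn
  unfold wd; omega

lemma wd_mul (d m x : ℕ) : wd (d * m) (d * x) = d * wd m x := by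
  unfold wd
  rw [Nat.mul_mod_mul_left, ← Nat.mul_sub]
  exact min_mul_mul_left d (x % m) (m - x % m)

lemma wd_pos (n c : ℕ) (hn : 0 < n) (h : ¬ (n ∣ c)) : 0 < wd n c := by
  have h1 := Nat.mod_lt c hn
  have h2 : c % n ≠ 0 := fun h0 => h (Nat.dvd_of_mod_eq_zero h0)
  unfold wd; omega

lemma wd_self_eq (n c : ℕ) (h : c % n = c) (h2 : 2*c ≤ n) : wd n c = c := by
  unfold wd; omega

lemma wd_congr (n c c' : ℕ) (h : c % n = c' % n) : wd n c = wd n c' := by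
  unfold wd; rw [h]

/-- |sin (c π / n)| = sin (wd n c * π / n) -/
lemma abs_sin_eq (n : ℕ) (hn : 0 < n) (c : ℕ) :
    |Real.sin (c * π / n)| = Real.sin (wd n c * π / n) := by
  have hr : c % n < n := Nat.mod_lt c hn
  have hnR : (0:ℝ) < n := by exact_mod_cast hn
  have key : |Real.sin (c * π / n)| = Real.sin ((c % n : ℕ) * π / n) := by
    have hc : (c : ℝ) * π / n = (c % n : ℕ) * π / n + (c / n : ℕ) * π := by
      field_simp
      have : (c : ℝ) = (c % n : ℕ) + (c / n : ℕ) * n := by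
        exact_mod_cast (Nat.mod_add_div' c n).symm
      rw [this]; ring
    rw [hc, Real.sin_add_nat_mul_pi, abs_mul, abs_pow, abs_neg, abs_one, one_pow, one_mul]
    apply abs_of_nonneg
    apply Real.sin_nonneg_of_nonneg_of_le_pi
    · positivity
    · rw [div_le_iff₀ hnR]
      have : ((c % n : ℕ) : ℝ) ≤ n := by exact_mod_cast hr.le
      nlinarith [Real.pi_pos]
  rw [key]
  unfold wd
  rcases le_total (c % n) (n - c % n) with h | h
  · rw [min_eq_left h]
  · rw [min_eq_right h]
    have : ((n - c % n : ℕ) : ℝ) * π / n = π - (c % n : ℕ) * π / n := by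
      have : ((n - c % n : ℕ) : ℝ) = n - (c % n : ℕ) := by
        push_cast [Nat.cast_sub hr.le]; ring
      rw [this]; field_simp
    rw [this, Real.sin_pi_sub]

lemma sin_mem_Icc (n u : ℕ) (hn : 0 < n) (hu : 2*u ≤ n) :
    (u : ℝ) * π / n ∈ Set.Icc (-(π/2)) (π/2) := by
  have hnR : (0:ℝ) < n := by exact_mod_cast hn
  have huR : (u:ℝ) * 2 ≤ n := by exact_mod_cast by omega
  constructor
  · have : (0:ℝ) ≤ (u:ℝ) * π / n := by positivity
    nlinarith [Real.pi_pos]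
  · rw [div_le_iff₀ hnR]
    nlinarith [Real.pi_pos]

lemma sin_lt_sin (n u v : ℕ) (hn : 0 < n) (hu : 2*u ≤ n) (hv : 2*v ≤ n) (huv : u < v) :
    Real.sin (u * π / n) < Real.sin (v * π / n) := by
  have hnR : (0:ℝ) < n := by exact_mod_cast hn
  apply Real.strictMonoOn_sin (sin_mem_Icc n u hn hu) (sin_mem_Icc n v hn hv)
  have : (u:ℝ) < v := by exact_mod_cast huv
  have hp := Real.pi_pos
  gcongr

lemma sin_nat_inj (n u v : ℕ) (hn : 0 < n) (hu : 2*u ≤ n) (hv : 2*v ≤ n)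
    (h : Real.sin (u * π / n) = Real.sin (v * π / n)) : u = v := by
  rcases lt_trichotomy u v with h' | h' | h'
  · exact absurd h (sin_lt_sin n u v hn hu hv h').ne
  · exact h'
  · exact absurd h.symm (sin_lt_sin n v u hn hv hu h').ne

lemma sin_nat_lt (n u v : ℕ) (hn : 0 < n) (hu : 2*u ≤ n) (hv : 2*v ≤ n)
    (h : Real.sin (u * π / n) < Real.sin (v * π / n)) : u < v := by
  by_contra h'
  push_neg at h'
  rcases Nat.lt_or_ge v u with h'' | h''
  · exact absurd (sin_lt_sin n v u hn hv hu h'') (not_lt.mpr h.le)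
  · have huv : u = v := le_antisymm h'' h'
    rw [huv] at h; exact lt_irrefl _ h

lemma sin_nat_pos (n v : ℕ) (hn : 0 < n) (hv : 2*v ≤ n) (hv0 : 0 < v) :
    0 < Real.sin (v * π / n) := by
  have := sin_lt_sin n 0 v hn (by omega) hv hv0
  simpa using this

lemma exp_pair (x : ℝ) :
    Complex.exp (x * Complex.I) - Complex.exp (-(x * Complex.I)) =
      2 * Real.sin x * Complex.I := by
  rw [show -((x:ℂ) * Complex.I) = (-x:ℝ) * Complex.I by push_cast; ring,
    Complex.exp_mul_I, Complex.exp_mul_I]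
  push_cast
  rw [Complex.cos_neg, Complex.sin_neg]
  ring

/-- Galois conjugation of a rational linear relation between sines. -/
lemma conj_sin_rel (n : ℕ) (hn : 0 < n) (a b : ℕ) (ha : a ≤ 2*n) (hb : b ≤ 2*n) (q : ℚ)
    (h : Real.sin (a * π / n) = q * Real.sin (b * π / n))
    (t : ℕ) (ht : Nat.Coprime t (2*n)) :
    Real.sin ((t*a : ℕ) * π / n) = q * Real.sin ((t*b : ℕ) * π / n) := by
  have h2n : (0:ℕ) < 2*n := by omega
  set ζ : ℂ := Complex.exp (2 * π * Complex.I / ((2*n : ℕ) : ℂ)) with hζdef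
  have hζ : IsPrimitiveRoot ζ (2*n) := Complex.isPrimitiveRoot_exp (2*n) (by omega)
  have hnR : ((n:ℂ)) ≠ 0 := by exact_mod_cast hn.ne'
  have hpow : ∀ c : ℕ, ζ^c = Complex.exp ((c * π / n : ℝ) * Complex.I) := by
    intro c
    rw [hζdef, ← Complex.exp_nat_mul]
    congr 1
    push_cast
    field_simp
  have hone : ζ^(2*n) = 1 := hζ.pow_eq_one
  have hinv : ∀ c k : ℕ, c ≤ 2*n*k →
      ζ^(2*n*k - c) = Complex.exp (-(((c:ℝ) * π / n : ℝ) * Complex.I)) := by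
    intro c k hc
    have h1 : ζ^(2*n*k - c) * ζ^c = 1 := by
      rw [← pow_add, show 2*n*k - c + c = 2*n*k by omega, pow_mul, hone, one_pow]
    have h2 : ζ^(2*n*k-c) = (ζ^c)⁻¹ := eq_inv_of_mul_eq_one_left h1
    rw [h2, hpow c, ← Complex.exp_neg]
  have hpair : ∀ c k : ℕ, c ≤ 2*n*k →
      ζ^c - ζ^(2*n*k - c) = 2 * Real.sin ((c:ℝ) * π / n) * Complex.I := by
    intro c k hc
    rw [hpow c, hinv c k hc, exp_pair]
  set R : ℚ[X] := X^a - X^(2*n - a) - C q * (X^b - X^(2*n - b)) with hRdef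
  have hC : ((Real.sin (a*π/n) : ℂ)) = (q:ℂ) * (Real.sin (b*π/n) : ℂ) := by
    exact_mod_cast congrArg Complex.ofReal h
  have hI2 : (2 * Complex.I) ≠ 0 := by simp [Complex.I_ne_zero]
  have haev : ∀ z : ℂ, aeval z R =
      z^a - z^(2*n-a) - (q:ℂ) * (z^b - z^(2*n-b)) := by
    intro z
    simp [hRdef, eq_ratCast (algebraMap ℚ ℂ) q]
  have hR : aeval ζ R = 0 := by
    rw [haev, show 2*n - a = 2*n*1 - a by ring_nf, show 2*n - b = 2*n*1 - b by ring_nf,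
      hpair a 1 (by omega), hpair b 1 (by omega)]
    linear_combination (2*Complex.I) * hC
  have hdvd : cyclotomic (2*n) ℚ ∣ R := by
    rw [cyclotomic_eq_minpoly_rat hζ h2n]
    exact minpoly.dvd ℚ ζ hR
  have hζt : IsPrimitiveRoot (ζ^t) (2*n) := hζ.pow_of_coprime t ht
  have hroot : aeval (ζ^t) (cyclotomic (2*n) ℚ) = 0 := by
    have := hζt.isRoot_cyclotomic h2n
    rwa [aeval_def, ← eval_map, map_cyclotomic, ← IsRoot.def]
  have hRt : aeval (ζ^t) R = 0 := by
    obtain ⟨S, hS⟩ := hdvd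
    rw [hS, map_mul, hroot, zero_mul]
  rw [haev] at hRt
  rw [← pow_mul, ← pow_mul, ← pow_mul, ← pow_mul] at hRt
  rw [show t * (2*n - a) = 2*n*t - t*a by rw [Nat.mul_sub]; ring_nf,
      show t * (2*n - b) = 2*n*t - t*b by rw [Nat.mul_sub]; ring_nf] at hRt
  rw [show t*a = a*t from mul_comm t a, show t*b = b*t from mul_comm t b] at hRt ⊢
  rw [hpair (a*t) t (by nlinarith), hpair (b*t) t (by nlinarith)] at hRt
  have key : ((Real.sin ((a*t:ℕ) * π / n) : ℂ)) = (q:ℂ) * (Real.sin ((b*t:ℕ) * π / n) : ℂ) := by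
    apply mul_left_cancel₀ hI2
    linear_combination hRt
  exact_mod_cast key

/-- Lift a congruence condition modulo `ℓ ∣ 2n` to a unit modulo `2n`. -/
lemma exists_unit_cong (n ℓ : ℕ) (hn : 0 < n) (hl : ℓ ∣ 2*n) (a u : ℕ)
    (ha : Nat.Coprime a ℓ) (hu : Nat.Coprime u ℓ) :
    ∃ t : ℕ, Nat.Coprime t (2*n) ∧ (t * a) % ℓ = u % ℓ := by
  haveI : NeZero (2*n) := ⟨by omega⟩
  set V : (ZMod ℓ)ˣ := ZMod.unitOfCoprime u hu * (ZMod.unitOfCoprime a ha)⁻¹ with hV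
  obtain ⟨U, hU⟩ := ZMod.unitsMap_surjective hl V
  refine ⟨(U : ZMod (2*n)).val, ZMod.val_coe_unit_coprime U, ?_⟩
  have hcast : (((U : ZMod (2*n)).val : ℕ) : ZMod ℓ) = (V : ZMod ℓ) := by
    rw [← hU]
    rw [ZMod.natCast_val]
    rfl
  have : ((((U : ZMod (2*n)).val * a : ℕ) : ZMod ℓ)) = ((u : ℕ) : ZMod ℓ) := by
    push_cast
    rw [hcast, hV]
    push_cast [ZMod.coe_unitOfCoprime]
    rw [mul_assoc, ← ZMod.coe_unitOfCoprime a ha, ← Units.val_mul, inv_mul_cancel,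
      Units.val_one, mul_one]
  exact (ZMod.natCast_eq_natCast_iff _ _ _).mp this

lemma mod4_mul (e ℓ : ℕ) (he : e % 2 = 1) (hl : ℓ % 2 = 0) : (e*ℓ) % 4 = ℓ % 4 := by
  rw [Nat.mul_mod]
  have h1 : e % 4 = 1 ∨ e % 4 = 3 := by omega
  have h2 : ℓ % 4 = 0 ∨ ℓ % 4 = 2 := by omega
  rcases h1 with h | h <;> rcases h2 with g | g <;> rw [h, g]

/-- For suitable `c ∈ {1,2}`, `ℓ/2 - c` is a unit mod `ℓ` at maximal distance. -/
lemma unit_max (ℓ c : ℕ) (hcases : (c = 1 ∧ ℓ % 4 = 0) ∨ (c = 2 ∧ ℓ % 4 = 2))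
    (hl : 2*c + 2 ≤ ℓ) :
    Nat.Coprime (ℓ/2 - c) ℓ ∧ wd ℓ (ℓ/2 - c) = ℓ/2 - c := by
  have hodd : (ℓ/2 - c) % 2 = 1 := by omega
  constructor
  · set g := Nat.gcd (ℓ/2 - c) ℓ with hg
    have hg1 : g ∣ ℓ/2 - c := Nat.gcd_dvd_left _ _
    have hg2 : g ∣ ℓ := Nat.gcd_dvd_right _ _
    have hg4 : g ∣ 2*c := by
      have hg3 : g ∣ 2*(ℓ/2 - c) := Dvd.dvd.mul_left hg1 2
      have heq : 2*c = ℓ - 2*(ℓ/2 - c) := by omega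
      rw [heq]
      exact Nat.dvd_sub hg2 hg3
    have hgodd : ¬ ((2:ℕ) ∣ g) := by
      intro h2g
      have : (2:ℕ) ∣ ℓ/2 - c := h2g.trans hg1
      omega
    have hgpos : 0 < g := Nat.gcd_pos_of_pos_right _ (by omega)
    have hgle : g ≤ 2*c := Nat.le_of_dvd (by omega) hg4
    unfold Nat.Coprime
    rcases hcases with ⟨hc, _⟩ | ⟨hc, _⟩ <;> subst hc <;> interval_cases g <;> omega
  · exact wd_self_eq ℓ (ℓ/2 - c) (Nat.mod_eq_of_lt (by omega)) (by omega)

/-- bound for the distance of units mod `m` -/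
lemma unit_bound (m c x : ℕ) (hcases : (c = 1 ∧ m % 4 = 0) ∨ (c = 2 ∧ m % 4 = 2))
    (hm : 4 ≤ m) (hx : Nat.Coprime x m) : wd m x ≤ m/2 - c := by
  have hx' : Nat.gcd x m = 1 := hx
  have hxodd : x % 2 = 1 := by
    by_contra hc2
    have h2x : (2:ℕ) ∣ x := by omega
    have h2 : (2:ℕ) ∣ Nat.gcd x m := Nat.dvd_gcd h2x (by omega)
    rw [hx'] at h2
    omega
  have hr : x % m % 2 = 1 := by
    rw [Nat.mod_mod_of_dvd x (by omega : 2 ∣ m)]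
    exact hxodd
  have hrm : x % m < m := Nat.mod_lt x (by omega)
  have hne : x % m ≠ m/2 := by
    intro heq
    have hd1 : m/2 ∣ x := by
      have hx2 : x = m * (x / m) + x % m := (Nat.div_add_mod x m).symm
      rw [heq] at hx2
      rw [hx2]
      have h2 : m/2 ∣ m := ⟨2, by omega⟩
      exact Nat.dvd_add (Dvd.dvd.mul_right h2 _) dvd_rfl
    have hd2 : m/2 ∣ m := ⟨2, by omega⟩
    have : m/2 ∣ Nat.gcd x m := Nat.dvd_gcd hd1 hd2
    rw [hx'] at this
    have := Nat.le_of_dvd (by omega) this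
    omega
  unfold wd
  omega

set_option maxHeartbeats 1000000 in
/-- For even `n ≥ 8` and integers `0 ≤ j < k` with `2k+1 ≤ n/2`, the ratio
`sin((2j+1)π/n)/sin((2k+1)π/n)` is rational if and only if `n = 12j+6` and `k = 3j+1`. -/
theorem sine_ratio_rational_iff_even_first (n : ℕ) (hn : 8 ≤ n) (heven : Even n)
    (j k : ℕ) (hjk : j < k) (hk : 2 * k + 1 ≤ n / 2) :
    (Real.sin ((2 * j + 1) * Real.pi / n) / Real.sin ((2 * k + 1) * Real.pi / n)) ∈
        Set.range ((↑) : ℚ → ℝ) ↔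
      (n = 12 * j + 6 ∧ k = 3 * j + 1) := by
  have hev2 : n % 2 = 0 := Nat.even_iff.mp heven
  have hnpos : 0 < n := by omega
  set a : ℕ := 2*j+1 with ha_def
  set b : ℕ := 2*k+1 with hb_def
  have hab : a < b := by omega
  have hb2 : 2*b ≤ n := by omega
  have ha2 : 2*a ≤ n := by omega
  have hcast_a : ((a:ℕ):ℝ) = 2*(j:ℝ)+1 := by rw [ha_def]; push_cast; ring
  have hcast_b : ((b:ℕ):ℝ) = 2*(k:ℝ)+1 := by rw [hb_def]; push_cast; ring
  have hgoal_eq : Real.sin ((2 * (j:ℝ) + 1) * π / n) / Real.sin ((2 * (k:ℝ) + 1) * π / n)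
      = Real.sin ((a:ℕ) * π / n) / Real.sin ((b:ℕ) * π / n) := by
    rw [hcast_a, hcast_b]
  constructor
  · rintro ⟨q, hq⟩
    rw [hgoal_eq] at hq
    have hsina_pos : 0 < Real.sin ((a:ℕ) * π / n) := sin_nat_pos n a hnpos ha2 (by omega)
    have hsinb_pos : 0 < Real.sin ((b:ℕ) * π / n) := sin_nat_pos n b hnpos hb2 (by omega)
    have hsin_lt : Real.sin ((a:ℕ) * π / n) < Real.sin ((b:ℕ) * π / n) :=
      sin_lt_sin n a b hnpos ha2 hb2 hab
    have hq0 : 0 < (q:ℝ) := by rw [hq]; positivity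
    have hq1 : (q:ℝ) < 1 := by
      rw [hq]
      exact (div_lt_one hsinb_pos).mpr hsin_lt
    have hrel : Real.sin ((a:ℕ) * π / n) = q * Real.sin ((b:ℕ) * π / n) := by
      rw [hq]; exact (div_mul_cancel₀ _ hsinb_pos.ne').symm
    -- star property
    have hstar : ∀ t : ℕ, Nat.Coprime t (2*n) →
        wd n (t*a) < wd n (t*b) ∧
        Real.sin ((wd n (t*a) : ℕ) * π / n) = q * Real.sin ((wd n (t*b) : ℕ) * π / n) := by
      intro t ht
      have h1 := conj_sin_rel n hnpos a b (by omega) (by omega) q hrel t ht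
      have h2 : |Real.sin ((t*a:ℕ) * π / n)| = q * |Real.sin ((t*b:ℕ) * π / n)| := by
        rw [h1, abs_mul, abs_of_pos hq0]
      rw [abs_sin_eq n hnpos (t*a), abs_sin_eq n hnpos (t*b)] at h2
      have htn : Nat.Coprime t n := Nat.Coprime.coprime_dvd_right ⟨2, by ring⟩ ht
      have hndvd : ¬ (n ∣ t*b) := by
        intro hdvd
        have : n ∣ b := (Nat.Coprime.symm htn).dvd_of_dvd_mul_left hdvd
        have := Nat.le_of_dvd (by omega) this
        omega
      have hwb_pos : 0 < wd n (t*b) := wd_pos n (t*b) hnpos hndvd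
      have hsb_pos : 0 < Real.sin ((wd n (t*b) : ℕ) * π / n) :=
        sin_nat_pos n _ hnpos (wd_le n (t*b) hnpos) hwb_pos
      have hlt : Real.sin ((wd n (t*a) : ℕ) * π / n) < Real.sin ((wd n (t*b) : ℕ) * π / n) := by
        rw [h2]
        nlinarith
      exact ⟨sin_nat_lt n _ _ hnpos (wd_le n (t*a) hnpos) (wd_le n (t*b) hnpos) hlt, h2⟩
    -- gcd decompositions
    set e : ℕ := Nat.gcd a n with he_def
    set d : ℕ := Nat.gcd b n with hd_def
    have hepos : 0 < e := Nat.gcd_pos_of_pos_left n (by omega)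
    have hdpos : 0 < d := Nat.gcd_pos_of_pos_left n (by omega)
    have hea : e ∣ a := Nat.gcd_dvd_left a n
    have hen : e ∣ n := Nat.gcd_dvd_right a n
    have hdb : d ∣ b := Nat.gcd_dvd_left b n
    have hdn : d ∣ n := Nat.gcd_dvd_right b n
    set ℓ : ℕ := n / e with hℓ_def
    set m : ℕ := n / d with hm_def
    set a' : ℕ := a / e with ha'_def
    set b' : ℕ := b / d with hb'_def
    have hne : n = e * ℓ := (Nat.mul_div_cancel' hen).symm
    have hnd : n = d * m := (Nat.mul_div_cancel' hdn).symm
    have hae : a = e * a' := (Nat.mul_div_cancel' hea).symm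
    have hbd : b = d * b' := (Nat.mul_div_cancel' hdb).symm
    have hcop_a : Nat.Coprime a' ℓ := Nat.coprime_div_gcd_div_gcd hepos
    have hcop_b : Nat.Coprime b' m := Nat.coprime_div_gcd_div_gcd hdpos
    have heodd : e % 2 = 1 := by
      by_contra hc2
      have h2e : (2:ℕ) ∣ e := by omega
      have : (2:ℕ) ∣ a := h2e.trans hea
      omega
    have hdodd : d % 2 = 1 := by
      by_contra hc2
      have h2d : (2:ℕ) ∣ d := by omega
      have : (2:ℕ) ∣ b := h2d.trans hdb
      omega
    have hℓeven : ℓ % 2 = 0 := by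
      rcases Nat.even_or_odd ℓ with hle | hlo
      · exact Nat.even_iff.mp hle
      · exfalso
        have : Odd (e * ℓ) := (Nat.odd_iff.mpr heodd).mul hlo
        rw [← hne] at this
        rw [Nat.odd_iff] at this
        omega
    have hmeven : m % 2 = 0 := by
      rcases Nat.even_or_odd m with hle | hlo
      · exact Nat.even_iff.mp hle
      · exfalso
        have : Odd (d * m) := (Nat.odd_iff.mpr hdodd).mul hlo
        rw [← hnd] at this
        rw [Nat.odd_iff] at this
        omega
    have hℓpos : 0 < ℓ := Nat.div_pos (Nat.le_of_dvd hnpos hen) hepos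
    have hmpos : 0 < m := Nat.div_pos (Nat.le_of_dvd hnpos hdn) hdpos
    have hℓ2 : 2 ≤ ℓ := by omega
    have hm2 : 2 ≤ m := by omega
    have hℓdvd : ℓ ∣ 2*n := Dvd.dvd.mul_left (Nat.div_dvd_of_dvd hen) 2
    have hmdvd : m ∣ 2*n := Dvd.dvd.mul_left (Nat.div_dvd_of_dvd hdn) 2
    clear_value e d ℓ m a' b'
    clear he_def hd_def hℓ_def hm_def ha'_def hb'_def
    have hta : ∀ t : ℕ, wd n (t*a) = e * wd ℓ (t*a') := by
      intro t
      rw [show t*a = e*(t*a') by rw [hae]; ring, hne]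
      exact wd_mul e ℓ (t*a')
    have htb : ∀ t : ℕ, wd n (t*b) = d * wd m (t*b') := by
      intro t
      rw [show t*b = d*(t*b') by rw [hbd]; ring, hnd]
      exact wd_mul d m (t*b')
    -- coprimality of t * a' with ℓ
    have htcop : ∀ t : ℕ, Nat.Coprime t (2*n) → Nat.Coprime (t*a') ℓ := by
      intro t ht
      exact Nat.Coprime.mul (ht.coprime_dvd_right hℓdvd) hcop_a
    have htcop' : ∀ t : ℕ, Nat.Coprime t (2*n) → Nat.Coprime (t*b') m := by
      intro t ht
      exact Nat.Coprime.mul (ht.coprime_dvd_right hmdvd) hcop_b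
    have hwpos_a : ∀ t : ℕ, Nat.Coprime t (2*n) → 1 ≤ wd ℓ (t*a') := by
      intro t ht
      apply wd_pos ℓ (t*a') hℓpos
      intro hdvd
      have h1 : ℓ ∣ Nat.gcd (t*a') ℓ := Nat.dvd_gcd hdvd dvd_rfl
      rw [htcop t ht] at h1
      have := Nat.le_of_dvd one_pos h1
      omega
    -- e < d
    have h_ed : e < d := by
      obtain ⟨t, ht, htc⟩ := exists_unit_cong n m hnpos hmdvd b' 1 hcop_b (Nat.coprime_one_left m)
      have h1 := (hstar t ht).1
      rw [hta t, htb t] at h1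
      have hw1 : wd m (t*b') = 1 := by
        rw [wd_congr m (t*b') 1 htc]
        exact wd_self_eq m 1 (Nat.mod_eq_of_lt (by omega)) (by omega)
      rw [hw1, mul_one] at h1
      have h2 := hwpos_a t ht
      have h3 : e ≤ e * wd ℓ (t*a') := Nat.le_mul_of_pos_right e (by omega)
      omega
    -- mod 4 bookkeeping
    have hn4 : n % 4 = 0 ∨ n % 4 = 2 := by omega
    have hℓ4 : ℓ % 4 = n % 4 := by rw [hne]; exact (mod4_mul e ℓ heodd hℓeven).symm
    have hm4' : m % 4 = n % 4 := by rw [hnd]; exact (mod4_mul d m hdodd hmeven).symm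
    -- first main step : m = 2
    have hm_eq : m = 2 := by
      by_contra hm_ne
      have hm4 : 4 ≤ m := by omega
      obtain ⟨cc, hcc_m, hcc_l⟩ : ∃ c, ((c = 1 ∧ m % 4 = 0) ∨ (c = 2 ∧ m % 4 = 2)) ∧
          ((c = 1 ∧ ℓ % 4 = 0) ∨ (c = 2 ∧ ℓ % 4 = 2)) := by
        rcases hn4 with h | h
        · exact ⟨1, Or.inl ⟨rfl, by omega⟩, Or.inl ⟨rfl, by omega⟩⟩
        · exact ⟨2, Or.inr ⟨rfl, by omega⟩, Or.inr ⟨rfl, by omega⟩⟩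
      have hℓm : m < ℓ := by
        by_contra hle
        push_neg at hle
        have t1 : e * ℓ ≤ e * m := Nat.mul_le_mul_left e hle
        have t2 : e * m < d * m := (Nat.mul_lt_mul_right hmpos).mpr h_ed
        omega
      obtain ⟨hcopu, hwu⟩ := unit_max ℓ cc hcc_l
        (by rcases hcc_l with ⟨h, h'⟩ | ⟨h, h'⟩ <;> omega)
      obtain ⟨t, ht, htc⟩ := exists_unit_cong n ℓ hnpos hℓdvd a' (ℓ/2 - cc) hcop_a hcopu
      have h1 := (hstar t ht).1
      rw [hta t, htb t, wd_congr ℓ (t*a') (ℓ/2-cc) htc, hwu] at h1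
      have hb_bound := unit_bound m cc (t*b') hcc_m hm4 (htcop' t ht)
      have harith1 : e * (ℓ/2 - cc) < d * (m/2 - cc) :=
        lt_of_lt_of_le h1 (Nat.mul_le_mul_left d hb_bound)
      have he2 : e * (ℓ/2) * 2 = n := by
        calc e * (ℓ/2) * 2 = e * ((ℓ/2)*2) := by ring
        _ = e * ℓ := by rw [show (ℓ/2)*2 = ℓ by omega]
        _ = n := hne.symm
      have hd2 : d * (m/2) * 2 = n := by
        calc d * (m/2) * 2 = d * ((m/2)*2) := by ring
        _ = d * m := by rw [show (m/2)*2 = m by omega]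
        _ = n := hnd.symm
      have hmul_e : e * (ℓ/2 - cc) = e*(ℓ/2) - e*cc := Nat.mul_sub e _ _
      have hmul_d : d * (m/2 - cc) = d*(m/2) - d*cc := Nat.mul_sub d _ _
      rcases hcc_l with ⟨hc, h'⟩ | ⟨hc, h'⟩ <;> subst hc <;> omega
    -- hence b = n/2
    have hd_eq : d = n/2 := by rw [hm_eq] at hnd; omega
    have hb'ne : b' ≠ 0 := by
      intro h0
      rw [h0, mul_zero] at hbd
      omega
    have hb'1 : b' = 1 := by
      by_contra h0
      have h2 : 2 ≤ b' := by omega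
      have h3 : d*2 ≤ d*b' := Nat.mul_le_mul_left d h2
      omega
    have hb_eq : b = n/2 := by
      rw [hb'1, mul_one] at hbd
      omega
    -- t is odd for units t
    have htodd : ∀ t : ℕ, Nat.Coprime t (2*n) → t % 2 = 1 := by
      intro t ht
      have hgt : Nat.gcd t (2*n) = 1 := ht
      by_contra hc2
      have h2t : (2:ℕ) ∣ t := by omega
      have h2 : (2:ℕ) ∣ Nat.gcd t (2*n) := Nat.dvd_gcd h2t ⟨n, rfl⟩
      omega
    -- angle conversion
    have he0 : ((e:ℝ)) ≠ 0 := by exact_mod_cast hepos.ne'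
    have hl0 : ((ℓ:ℝ)) ≠ 0 := by exact_mod_cast hℓpos.ne'
    have hangle : ∀ W : ℕ, ((e*W : ℕ):ℝ) * π / (n:ℝ) = (W:ℝ) * π / ℓ := by
      intro W
      rw [hne]
      push_cast
      field_simp
    have hhalf0 : ((n/2 : ℕ):ℝ) ≠ 0 := by
      have : (4:ℕ) ≤ n/2 := by omega
      exact_mod_cast by omega
    have hsinhalf : Real.sin (((n/2 : ℕ):ℝ) * π / n) = 1 := by
      have hn2 : (n:ℝ) = 2*((n/2:ℕ):ℝ) := by exact_mod_cast (by omega : n = 2*(n/2))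
      rw [show ((n/2:ℕ):ℝ) * π / n = π/2 by rw [hn2]; field_simp]
      exact Real.sin_pi_div_two
    -- the constancy property
    have hconst : ∀ u : ℕ, Nat.Coprime u ℓ → Real.sin ((wd ℓ u : ℕ) * π / ℓ) = (q:ℝ) := by
      intro u hu
      obtain ⟨t, ht, htc⟩ := exists_unit_cong n ℓ hnpos hℓdvd a' u hcop_a hu
      have h2 := (hstar t ht).2
      have hwb : wd n (t*b) = n/2 := by
        obtain ⟨nh, hnh⟩ : ∃ nh, n = nh*2 := ⟨n/2, by omega⟩
        have hb_eq' : b = nh := by omega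
        rw [show t*b = nh*t by rw [hb_eq']; ring, hnh, wd_mul nh 2 t,
          show wd 2 t = 1 by have := htodd t ht; unfold wd; omega]
        omega
      rw [hta t, hwb, wd_congr ℓ (t*a') u htc, hangle (wd ℓ u), hsinhalf, mul_one] at h2
      exact h2
    -- a' is small
    have ha'pos : 0 < a' := by
      rcases Nat.eq_zero_or_pos a' with h0 | h; · rw [h0, mul_zero] at hae; omega
      exact h
    have ha'small : 2*a' < ℓ := by
      have h2a : 2*a < n := by omega
      have hstep : e*(2*a') < e*ℓ := by
        calc e*(2*a') = 2*(e*a') := by ring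
        _ = 2*a := by rw [← hae]
        _ < n := h2a
        _ = e*ℓ := hne
      exact Nat.lt_of_mul_lt_mul_left hstep
    have hwd1 : wd ℓ 1 = 1 := wd_self_eq ℓ 1 (Nat.mod_eq_of_lt (by omega)) (by omega)
    have hq_eq : (q:ℝ) = Real.sin ((1:ℕ) * π / ℓ) := by
      rw [← hconst 1 (Nat.coprime_one_left ℓ), hwd1]
    -- case analysis on ℓ
    have hℓcases : ℓ = 2 ∨ ℓ = 4 ∨ ℓ = 6 ∨ 8 ≤ ℓ := by omega
    rcases hℓcases with hℓv | hℓv | hℓv | hℓv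
    · omega
    · -- ℓ = 4 : q = sin(π/4) irrational, contradiction
      exfalso
      have hq4 : (q:ℝ) = Real.sin (π/4) := by
        rw [hq_eq, hℓv]
        norm_num
      rw [Real.sin_pi_div_four] at hq4
      have hsq : Real.sqrt 2 = (((2*q : ℚ):ℚ):ℝ) := by
        push_cast
        nlinarith [Real.sq_sqrt (by norm_num : (2:ℝ) ≥ 0), Real.sqrt_nonneg 2]
      exact irrational_sqrt_two ⟨2*q, hsq.symm⟩
    · -- ℓ = 6 : the good case
      have ha'1 : a' = 1 := by
        have : a' ≠ 2 := by
          intro h2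
          rw [h2, hℓv] at hcop_a
          exact absurd hcop_a (by decide)
        omega
      rw [ha'1, mul_one] at hae
      rw [hℓv] at hne
      constructor <;> omega
    · -- ℓ ≥ 8 : contradiction via a second unit
      exfalso
      obtain ⟨cc, hcc_l⟩ : ∃ c, ((c = 1 ∧ ℓ % 4 = 0) ∨ (c = 2 ∧ ℓ % 4 = 2)) := by
        rcases hn4 with h | h
        · exact ⟨1, Or.inl ⟨rfl, by omega⟩⟩
        · exact ⟨2, Or.inr ⟨rfl, by omega⟩⟩
      obtain ⟨hcopu, hwu⟩ := unit_max ℓ cc hcc_l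
        (by rcases hcc_l with ⟨h, h'⟩ | ⟨h, h'⟩ <;> omega)
      have hv := hconst (ℓ/2 - cc) hcopu
      rw [hwu] at hv
      have hinj : ℓ/2 - cc = 1 := by
        apply sin_nat_inj ℓ _ _ hℓpos (by omega) (by omega)
        rw [hv, hq_eq]
      rcases hcc_l with ⟨hc, h'⟩ | ⟨hc, h'⟩ <;> omega
  · rintro ⟨h1, h2⟩
    subst h1 h2
    refine ⟨1/2, ?_⟩
    have hj1 : (0:ℝ) < 2*(j:ℝ)+1 := by positivity
    have h6 : ((12*j+6 : ℕ):ℝ) = 6*(2*(j:ℝ)+1) := by push_cast; ring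
    have hpi := Real.pi_pos
    rw [h6]
    have e1 : (2 * (j:ℝ) + 1) * π / (6*(2*(j:ℝ)+1)) = π/6 := by
      field_simp
    have e2 : (2 * ((3*j+1 : ℕ):ℝ) + 1) * π / (6*(2*(j:ℝ)+1)) = π/2 := by
      have : (2 * ((3*j+1 : ℕ):ℝ) + 1) = 3*(2*(j:ℝ)+1) := by push_cast; ring
      rw [this]
      field_simp
      ring
    rw [e1, e2, Real.sin_pi_div_six, Real.sin_pi_div_two]
    norm_num
end

section
/- Let n ≥ 8 be an even integer and let j, k be integers with 0 ≤ j < k and 2k+2 ≤ n/2. Then sin((2j+2)π/n)/sin((2k+2)π/n) is rational if and only if n = 12j+12 and k = 3j+2. -/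
open Finset Polynomial Complex

section Aux

/-- Fibers of a surjective monoid hom between finite groups have constant size,
and products compose accordingly. -/
lemma prod_comp_surj' {G H M : Type*} [Group G] [Group H] [Fintype G] [Fintype H]
    [DecidableEq H] [CommMonoid M] (φ : G →* H) (hs : Function.Surjective φ)
    (f : H → M) :
    ∃ K, K * Fintype.card H = Fintype.card G ∧
      ∏ g : G, f (φ g) = (∏ h : H, f h) ^ K := by
  classical
  set K := (univ.filter (fun g => φ g = (1:H))).card with hK
  have hfib : ∀ h : H, (univ.filter (fun g => φ g = h)).card = K := by
    intro h
    obtain ⟨g₀, hg₀⟩ := hs h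
    apply Finset.card_bij (fun g _ => g₀⁻¹ * g)
    · intro a ha
      simp only [mem_filter, mem_univ, true_and] at ha ⊢
      simp [map_mul, ha, hg₀]
    · intro a ha b hb hab
      exact mul_left_cancel hab
    · intro b hb
      refine ⟨g₀ * b, ?_, by group⟩
      simp only [mem_filter, mem_univ, true_and] at hb ⊢
      simp [map_mul, hb, hg₀]
  refine ⟨K, ?_, ?_⟩
  · have := Finset.card_eq_sum_card_fiberwise (s := (univ : Finset G)) (t := (univ : Finset H))
      (f := fun g => φ g) (fun x _ => mem_univ _)
    simp only [hfib, Finset.sum_const, smul_eq_mul] at this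
    rw [Fintype.card, Fintype.card, this]
    simp [mul_comm]
  · rw [← Finset.prod_fiberwise_of_maps_to' (g := fun g => φ g)
      (fun (x : G) (_ : x ∈ univ) => mem_univ (φ x)) f]
    rw [← Finset.prod_pow]
    refine Finset.prod_congr rfl fun h _ => ?_
    rw [Finset.prod_const, hfib]

lemma pow_eq_of_modEq' {M : Type*} [Monoid M] {z : M} {m : ℕ} (h1 : z ^ m = 1)
    {a b : ℕ} (hab : a ≡ b [MOD m]) : z ^ a = z ^ b := by
  have key : ∀ x : ℕ, z ^ x = z ^ (x % m) := by
    intro x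
    conv_lhs => rw [← Nat.mod_add_div x m]
    rw [pow_add, pow_mul, h1, one_pow, mul_one]
  rw [key a, key b, hab]

/-- Norm-type product over the units of `ZMod n` of `ζ^(c·t) - 1`. -/
lemma cyclo_prod' (n : ℕ) [NeZero n] (hn : 0 < n) {ζ : ℂ} (hζ : IsPrimitiveRoot ζ n)
    (c : ℕ) (hc : 0 < c) (hcn : c < n) :
    ∃ K, K * Nat.totient (n / Nat.gcd c n) = Nat.totient n ∧ 1 < n / Nat.gcd c n ∧
      ∏ t : (ZMod n)ˣ, (ζ ^ (c * (t : ZMod n).val) - 1)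
        = (-1) ^ Nat.totient n * (((cyclotomic (n / Nat.gcd c n) ℤ).eval 1 : ℤ) : ℂ) ^ K := by
  classical
  set d := Nat.gcd c n with hd
  set m := n / d with hm
  have hd0 : 0 < d := Nat.gcd_pos_of_pos_left _ hc
  have hdn : d ∣ n := Nat.gcd_dvd_right c n
  have hmn : m ∣ n := Nat.div_dvd_of_dvd hdn
  have hnm : n = d * m := by rw [hm, Nat.mul_div_cancel' hdn]
  have hm0 : 0 < m := Nat.div_pos (Nat.le_of_dvd hn hdn) hd0
  have hm1 : 1 < m := by
    by_contra h
    have hm1' : m = 1 := by omega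
    have hdn' : d = n := by rw [hnm, hm1', mul_one]
    have h3 : n ∣ c := hdn' ▸ Nat.gcd_dvd_left c n
    have := Nat.le_of_dvd hc h3
    omega
  haveI : NeZero m := ⟨by omega⟩
  set ζm := ζ ^ d with hζmdef
  have hζm : IsPrimitiveRoot ζm m := IsPrimitiveRoot.pow hn hζ hnm
  have hord : orderOf ζm = m := (hζm.eq_orderOf).symm
  set e := c / d with he
  have hce : c = d * e := (Nat.mul_div_cancel' (Nat.gcd_dvd_left c n)).symm
  have hem : Nat.Coprime e m := Nat.coprime_div_gcd_div_gcd hd0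
  set π := ZMod.unitsMap hmn with hπ
  have hfac : ∀ t : (ZMod n)ˣ,
      ζ ^ (c * (t : ZMod n).val) - 1 = ζm ^ (e * ((π t : ZMod m)).val) - 1 := by
    intro t
    have h1 : ζ ^ (c * (t : ZMod n).val) = ζm ^ (e * (t : ZMod n).val) := by
      rw [hζmdef, ← pow_mul]
      congr 1
      rw [hce]; ring
    have hmod : (t : ZMod n).val ≡ ((π t : ZMod m)).val [MOD m] := by
      rw [← ZMod.natCast_eq_natCast_iff]
      have h2 : (((t : ZMod n).val : ℕ) : ZMod m) = (π t : ZMod m) := by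
        rw [ZMod.natCast_val, hπ, ZMod.unitsMap]
        simp [ZMod.castHom_apply]
      rw [h2, ZMod.natCast_val, ZMod.cast_id]
    rw [h1, pow_eq_of_modEq' hζm.pow_eq_one (hmod.mul_left e)]
  rw [Finset.prod_congr rfl (fun t _ => hfac t)]
  obtain ⟨K, hK, hprod⟩ := prod_comp_surj' π (ZMod.unitsMap_surjective hmn)
    (fun u => ζm ^ (e * ((u : ZMod m)).val) - 1)
  refine ⟨K, ?_, hm1, ?_⟩
  · rwa [ZMod.card_units_eq_totient, ZMod.card_units_eq_totient] at hK
  · rw [hprod]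
    set ε := ZMod.unitOfCoprime e hem with hε
    have step1 : ∀ u : (ZMod m)ˣ,
        ζm ^ (e * ((u : ZMod m)).val) - 1 = ζm ^ (((ε * u : (ZMod m)ˣ) : ZMod m)).val - 1 := by
      intro u
      congr 1
      apply pow_eq_of_modEq' hζm.pow_eq_one
      rw [← ZMod.natCast_eq_natCast_iff]
      push_cast
      rw [ZMod.natCast_val, ZMod.cast_id, ZMod.natCast_val, ZMod.cast_id]
      simp [hε, ZMod.coe_unitOfCoprime]
    rw [Finset.prod_congr rfl (fun u _ => step1 u)]
    have step2 : ∏ u : (ZMod m)ˣ, (ζm ^ (((ε * u : (ZMod m)ˣ) : ZMod m)).val - 1)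
        = ∏ v : (ZMod m)ˣ, (ζm ^ ((v : ZMod m)).val - 1) :=
      Fintype.prod_equiv (Equiv.mulLeft ε) _ _ (fun u => rfl)
    rw [step2]
    have hinj : Function.Injective (fun v : (ZMod m)ˣ => ζm ^ ((v : ZMod m)).val) := by
      intro v w hvw
      have := (hζm.pow_inj (ZMod.val_lt _) (ZMod.val_lt _)) hvw
      ext
      exact (ZMod.val_injective m this)
    have himg : Finset.image (fun v : (ZMod m)ˣ => ζm ^ ((v : ZMod m)).val) Finset.univ
        = primitiveRoots m ℂ := by
      apply Finset.eq_of_subset_of_card_le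
      · intro x hx
        simp only [Finset.mem_image] at hx
        obtain ⟨v, _, rfl⟩ := hx
        exact (mem_primitiveRoots hm0).mpr
          (hζm.pow_of_coprime _ (ZMod.val_coe_unit_coprime v))
      · rw [Complex.card_primitiveRoots, Finset.card_image_of_injective _ hinj,
          Finset.card_univ, ZMod.card_units_eq_totient]
    have step3 : ∏ v : (ZMod m)ˣ, (ζm ^ ((v : ZMod m)).val - 1)
        = ∏ μ ∈ primitiveRoots m ℂ, (μ - 1) := by
      rw [← himg, Finset.prod_image (fun x _ y _ h => hinj h)]
    rw [step3]
    have hcyc : (cyclotomic m ℂ).eval 1 = ∏ μ ∈ primitiveRoots m ℂ, (1 - μ) := by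
      rw [cyclotomic_eq_prod_X_sub_primitiveRoots hζm]
      simp [eval_prod]
    have hsign : ∏ μ ∈ primitiveRoots m ℂ, (μ - 1)
        = (-1) ^ Nat.totient m * (cyclotomic m ℂ).eval 1 := by
      rw [hcyc, ← Complex.card_primitiveRoots m, ← Finset.prod_const, ← Finset.prod_mul_distrib]
      exact Finset.prod_congr rfl (fun μ _ => by ring)
    rw [hsign]
    have hcast : (cyclotomic m ℂ).eval 1 = (((cyclotomic m ℤ).eval 1 : ℤ) : ℂ) := by
      rw [← map_cyclotomic_int m ℂ, eval_map, eval₂_at_one]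
      simp
    have hKt : K * Nat.totient m = Nat.totient n := by
      rwa [ZMod.card_units_eq_totient, ZMod.card_units_eq_totient] at hK
    rw [hcast, mul_pow, ← pow_mul, Nat.mul_comm, hKt]

lemma exp_sub_exp_inv' (θ : ℝ) :
    Complex.exp ((θ : ℂ) * I) - (Complex.exp ((θ : ℂ) * I))⁻¹
      = 2 * I * (Real.sin θ : ℂ) := by
  rw [← Complex.exp_neg, ← neg_mul, Complex.exp_mul_I, Complex.exp_mul_I,
    Complex.cos_neg, Complex.sin_neg, Complex.ofReal_sin]
  ring

/-- Galois-conjugate form of a rational relation between sines. -/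
lemma conj_rel' (n : ℕ) [NeZero n] (p q : ℕ) (hpq : p ≤ q) (s : ℚ)
    (hrel : Real.sin (2 * Real.pi * p / n) = (s : ℝ) * Real.sin (2 * Real.pi * q / n))
    (t : (ZMod n)ˣ) :
    ‖(Complex.exp (2 * Real.pi * I / n)) ^ (2 * p * (t : ZMod n).val) - 1‖
      = |(s : ℝ)| * ‖(Complex.exp (2 * Real.pi * I / n)) ^ (2 * q * (t : ZMod n).val) - 1‖ := by
  have hn : (n : ℕ) ≠ 0 := NeZero.ne n
  set ζ := Complex.exp (2 * Real.pi * I / n) with hζdef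
  have hζ : IsPrimitiveRoot ζ n := Complex.isPrimitiveRoot_exp n hn
  have hζ0 : ζ ≠ 0 := Complex.exp_ne_zero _
  have hpow : ∀ c : ℕ, ζ ^ c = Complex.exp (((2 * Real.pi * c / n : ℝ) : ℂ) * I) := by
    intro c
    rw [hζdef, ← Complex.exp_nat_mul]
    congr 1
    have : (n : ℂ) ≠ 0 := Nat.cast_ne_zero.mpr hn
    push_cast
    field_simp
  set g : Polynomial ℚ :=
    Polynomial.X ^ (q + p) - Polynomial.X ^ (q - p)
      - Polynomial.C s * (Polynomial.X ^ (2 * q) - 1) with hg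
  have hroot : ∀ μ : ℂ, (Polynomial.aeval μ) g = 0 →
      μ ^ (q + p) - μ ^ (q - p) = (s : ℂ) * (μ ^ (2 * q) - 1) := by
    intro μ h
    simp only [hg, map_sub, map_pow, map_mul, map_one, Polynomial.aeval_X,
      Polynomial.aeval_C, eq_ratCast] at h
    linear_combination h
  have haeval : (Polynomial.aeval ζ) g = 0 := by
    simp only [hg, map_sub, map_pow, map_mul, map_one, Polynomial.aeval_X,
      Polynomial.aeval_C, eq_ratCast]
    have hA0 : ζ ^ p ≠ 0 := pow_ne_zero _ hζ0
    have hB0 : ζ ^ q ≠ 0 := pow_ne_zero _ hζ0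
    have h1 : ζ ^ (q - p) = ζ ^ q * (ζ ^ p)⁻¹ := by
      rw [eq_mul_inv_iff_mul_eq₀ hA0, ← pow_add]
      congr 1; omega
    have h3 : ζ ^ (q + p) = ζ ^ q * ζ ^ p := by rw [← pow_add]
    have h4 : ζ ^ (2 * q) = ζ ^ q * ζ ^ q := by rw [← pow_add]; congr 1; omega
    have hkey : ζ ^ (q + p) - ζ ^ (q - p) - (s : ℂ) * (ζ ^ (2 * q) - 1)
        = ζ ^ q * ((ζ ^ p - (ζ ^ p)⁻¹) - (s : ℂ) * (ζ ^ q - (ζ ^ q)⁻¹)) := by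
      rw [h1, h3, h4]
      field_simp
    have hsp := exp_sub_exp_inv' (2 * Real.pi * p / n)
    have hsq := exp_sub_exp_inv' (2 * Real.pi * q / n)
    rw [← hpow p] at hsp
    rw [← hpow q] at hsq
    have hrelC : ((Real.sin (2 * Real.pi * p / n) : ℝ) : ℂ)
        = (s : ℂ) * ((Real.sin (2 * Real.pi * q / n) : ℝ) : ℂ) := by
      exact_mod_cast congrArg (fun x : ℝ => (x : ℂ)) hrel
    rw [hkey]
    rw [hsp]
    rw [hsq]
    rw [hrelC]
    try ring
  have hdvd : Polynomial.cyclotomic n ℚ ∣ g := by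
    rw [Polynomial.cyclotomic_eq_minpoly_rat hζ (Nat.pos_of_ne_zero hn)]
    exact minpoly.dvd ℚ ζ haeval
  set μ := ζ ^ (t : ZMod n).val with hμdef
  have hμ : IsPrimitiveRoot μ n := hζ.pow_of_coprime _ (ZMod.val_coe_unit_coprime t)
  haveI : NeZero ((n : ℕ) : ℂ) := ⟨Nat.cast_ne_zero.mpr hn⟩
  have hμg : (Polynomial.aeval μ) g = 0 := by
    obtain ⟨h, hh⟩ := hdvd
    rw [hh, map_mul]
    have hcz : (Polynomial.aeval μ) (Polynomial.cyclotomic n ℚ) = 0 := by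
      rw [Polynomial.aeval_def, ← Polynomial.eval_map, Polynomial.map_cyclotomic]
      exact (Polynomial.isRoot_cyclotomic_iff.mpr hμ)
    rw [hcz, zero_mul]
  have key := hroot μ hμg
  have key2 : μ ^ (q - p) * (μ ^ (2 * p) - 1) = (s : ℂ) * (μ ^ (2 * q) - 1) := by
    rw [← key, mul_sub, mul_one, ← pow_add]
    congr 2
    omega
  have habsμ : ‖μ‖ = 1 := hμ.norm'_eq_one hn
  have habs := congrArg norm key2
  rw [norm_mul, norm_mul, norm_pow, habsμ, one_pow, one_mul] at habs
  have habss : ‖(s : ℂ)‖ = |(s : ℝ)| := by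
    rw [← Real.norm_eq_abs, ← Complex.norm_real, Complex.ofReal_ratCast]
  rw [habss] at habs
  have hexp1 : μ ^ (2 * p) = ζ ^ (2 * p * (t : ZMod n).val) := by
    rw [hμdef, ← pow_mul, mul_comm ((t : ZMod n).val)]
  have hexp2 : μ ^ (2 * q) = ζ ^ (2 * q * (t : ZMod n).val) := by
    rw [hμdef, ← pow_mul, mul_comm ((t : ZMod n).val)]
  rw [hexp1, hexp2] at habs
  exact habs

lemma endgame' (N Kp Kq φq A B u v : ℕ)
    (hN : 0 < N) (hKq : Kq * φq = N)
    (huv : Nat.Coprime u v) (hu : 0 < u) (huvlt : u < v)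
    (heq : A ^ Kp * v ^ N = u ^ N * B ^ Kq)
    (hB : B = 1 ∨ Nat.Prime B) :
    φq = 1 ∧ v = B := by
  have hv2 : 2 ≤ v := by omega
  have hvdvd : v ^ N ∣ u ^ N * B ^ Kq := ⟨A ^ Kp, by rw [← heq]; ring⟩
  have hcop : Nat.Coprime (v ^ N) (u ^ N) := Nat.Coprime.pow N N (huv.symm)
  have hvB : v ^ N ∣ B ^ Kq := (Nat.Coprime.dvd_of_dvd_mul_left hcop hvdvd)
  rcases hB with hB1 | hBp
  · exfalso
    rw [hB1, one_pow, Nat.dvd_one] at hvB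
    have := Nat.one_lt_two_pow_iff (n := N) |>.2 (by omega)
    have hle : 2 ^ N ≤ v ^ N := Nat.pow_le_pow_left hv2 N
    omega
  · have hKq0 : 0 < Kq := by
      rcases Nat.eq_zero_or_pos Kq with h | h
      · rw [h] at hKq; omega
      · exact h
    have hvd : v ∣ B ^ Kq := dvd_trans (dvd_pow_self v (by omega)) hvB
    obtain ⟨c, hc, hvc⟩ := (Nat.dvd_prime_pow hBp).mp hvd
    have hc1 : 1 ≤ c := by
      by_contra h
      have : c = 0 := by omega
      rw [this, pow_zero] at hvc
      omega
    have hvNpow : v ^ N = B ^ (c * N) := by rw [hvc, ← pow_mul]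
    have hdvd2 : B ^ (c * N) ∣ B ^ Kq := hvNpow ▸ hvB
    have hcN : c * N ≤ Kq := (Nat.pow_dvd_pow_iff_le_right hBp.one_lt).mp hdvd2
    have hφq1 : φq = 1 ∧ c = 1 := by
      have hφq0 : 0 < φq := by
        rcases Nat.eq_zero_or_pos φq with h | h
        · rw [h, Nat.mul_zero] at hKq; omega
        · exact h
      constructor <;> nlinarith [hKq, hcN, hc1, hKq0]
    obtain ⟨hφ1, hc1'⟩ := hφq1
    exact ⟨hφ1, by rw [hvc, hc1', pow_one]⟩

end Aux

/-- For even `n ≥ 8` and integers `0 ≤ j < k` with `2k+2 ≤ n/2`, the ratio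
`sin((2j+2)π/n)/sin((2k+2)π/n)` is rational if and only if `n = 12j+12` and `k = 3j+2`. -/
theorem sine_ratio_rational_iff_even_second (n : ℕ) (hn : 8 ≤ n) (heven : Even n)
    (j k : ℕ) (hjk : j < k) (hk : 2 * k + 2 ≤ n / 2) :
    (Real.sin ((2 * j + 2) * Real.pi / n) / Real.sin ((2 * k + 2) * Real.pi / n)) ∈
        Set.range ((↑) : ℚ → ℝ) ↔
      (n = 12 * j + 12 ∧ k = 3 * j + 2) := by
  have hpi := Real.pi_pos
  haveI : NeZero n := ⟨by omega⟩
  have hn0 : (0:ℝ) < n := by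
    have : (0:ℕ) < n := by omega
    exact_mod_cast this
  set p := j + 1 with hp
  set q := k + 1 with hq
  have h4q : 4 * q ≤ n := by
    obtain ⟨m', hm'⟩ := heven
    omega
  have hpq : p < q := by omega
  have hA : (2 * (j:ℝ) + 2) * Real.pi / n = 2 * Real.pi * (p:ℝ) / n := by
    push_cast [hp]; ring
  have hB : (2 * (k:ℝ) + 2) * Real.pi / n = 2 * Real.pi * (q:ℝ) / n := by
    push_cast [hq]; ring
  rw [hA, hB]
  set α := 2 * Real.pi * (p:ℝ) / n with hα
  set β := 2 * Real.pi * (q:ℝ) / n with hβ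
  have hppos : (0:ℝ) < p := by
    have : (0:ℕ) < p := by omega
    exact_mod_cast this
  have hpqR : (p:ℝ) < q := by exact_mod_cast hpq
  have hα_pos : 0 < α := by rw [hα]; positivity
  have hαβ : α < β := by
    rw [hα, hβ]
    gcongr
  have hβ_le : β ≤ Real.pi / 2 := by
    rw [hβ, div_le_div_iff₀ hn0 (by norm_num : (0:ℝ) < 2)]
    have h4 : (4 * q : ℝ) ≤ n := by exact_mod_cast h4q
    nlinarith
  have hsinβ_pos : 0 < Real.sin β :=
    Real.sin_pos_of_pos_of_lt_pi (by linarith) (by linarith)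
  have hsinα_pos : 0 < Real.sin α :=
    Real.sin_pos_of_pos_of_lt_pi hα_pos (by linarith)
  have hsinlt : Real.sin α < Real.sin β :=
    Real.strictMonoOn_sin ⟨by linarith, by linarith⟩ ⟨by linarith, by linarith⟩ hαβ
  constructor
  · rintro ⟨s, hs⟩
    -- hs : (s:ℝ) = sin α / sin β
    have hs0R : (0:ℝ) < s := by rw [hs]; exact div_pos hsinα_pos hsinβ_pos
    have hs1R : (s:ℝ) < 1 := by rw [hs]; exact (div_lt_one hsinβ_pos).mpr hsinlt
    have hsβ : Real.sin α = (s:ℝ) * Real.sin β := by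
      rw [hs, div_mul_cancel₀ _ hsinβ_pos.ne']
    have hrel0 : Real.sin (2 * Real.pi * (p:ℝ) / n) = (s:ℝ) * Real.sin (2 * Real.pi * (q:ℝ) / n) := by
      rw [← hα, ← hβ]; exact hsβ
    have hconj := fun t => conj_rel' n p q (le_of_lt hpq) s hrel0 t
    set N := Nat.totient n with hN
    have hNpos : 0 < N := by
      rw [hN]
      exact Nat.totient_pos.mpr (by omega)
    set ζ := Complex.exp (2 * Real.pi * Complex.I / n) with hζdef
    have hζ : IsPrimitiveRoot ζ n := Complex.isPrimitiveRoot_exp n (by omega)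
    obtain ⟨Kp, hKp, hmp1, hPp⟩ := cyclo_prod' n (by omega) hζ (2*p) (by omega) (by omega)
    obtain ⟨Kq, hKq, hmq1, hPq⟩ := cyclo_prod' n (by omega) hζ (2*q) (by omega) (by omega)
    set mp := n / Nat.gcd (2*p) n with hmp
    set mq := n / Nat.gcd (2*q) n with hmqdef
    set Ep := (cyclotomic mp ℤ).eval 1 with hEp
    set Eq' := (cyclotomic mq ℤ).eval 1 with hEq'
    have hEp0 : 0 ≤ Ep := cyclotomic_nonneg mp le_rfl
    have hEq0 : 0 ≤ Eq' := cyclotomic_nonneg mq le_rfl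
    have habsint : ∀ (E : ℤ), 0 ≤ E → ∀ K : ℕ,
        ‖(-1) ^ N * ((E : ℤ) : ℂ) ^ K‖ = (E : ℝ) ^ K := by
      intro E hE K
      rw [norm_mul, norm_pow, norm_pow, norm_neg, norm_one, one_pow, one_mul,
        Complex.norm_intCast, _root_.abs_of_nonneg (by exact_mod_cast hE)]
    have hAbsP : ∏ t : (ZMod n)ˣ, ‖ζ ^ (2*p*(t : ZMod n).val) - 1‖ = (Ep:ℝ) ^ Kp := by
      rw [← norm_prod, hPp, habsint Ep hEp0 Kp]
    have hAbsQ : ∏ t : (ZMod n)ˣ, ‖ζ ^ (2*q*(t : ZMod n).val) - 1‖ = (Eq':ℝ) ^ Kq := by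
      rw [← norm_prod, hPq, habsint Eq' hEq0 Kq]
    have hprodeq : (Ep:ℝ) ^ Kp = (s:ℝ) ^ N * (Eq':ℝ) ^ Kq := by
      calc (Ep:ℝ) ^ Kp = ∏ t : (ZMod n)ˣ, ‖ζ ^ (2*p*(t : ZMod n).val) - 1‖ :=
            hAbsP.symm
        _ = ∏ t : (ZMod n)ˣ, ((s:ℝ) * ‖ζ ^ (2*q*(t : ZMod n).val) - 1‖) := by
            refine Finset.prod_congr rfl fun t _ => ?_
            rw [hconj t, _root_.abs_of_pos hs0R]
        _ = (s:ℝ) ^ N * ∏ t : (ZMod n)ˣ, ‖ζ ^ (2*q*(t : ZMod n).val) - 1‖ := by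
            rw [Finset.prod_mul_distrib, Finset.prod_const, Finset.card_univ,
              ZMod.card_units_eq_totient]
        _ = (s:ℝ) ^ N * (Eq':ℝ) ^ Kq := by rw [hAbsQ]
    -- pass to rationals and naturals
    have hQ : ((Ep.toNat : ℚ)) ^ Kp = s ^ N * ((Eq'.toNat : ℚ)) ^ Kq := by
      have h1 : ((Ep.toNat : ℝ)) ^ Kp = (s:ℝ) ^ N * ((Eq'.toNat : ℝ)) ^ Kq := by
        rw [show ((Ep.toNat : ℝ)) = (Ep : ℝ) by
            exact_mod_cast congrArg (fun z : ℤ => (z : ℝ)) (Int.toNat_of_nonneg hEp0),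
          show ((Eq'.toNat : ℝ)) = (Eq' : ℝ) by
            exact_mod_cast congrArg (fun z : ℤ => (z : ℝ)) (Int.toNat_of_nonneg hEq0)]
        exact hprodeq
      exact_mod_cast h1
    set u := s.num.toNat with hu
    set v := s.den with hv
    have hs0Q : 0 < s := by exact_mod_cast hs0R
    have hs1Q : s < 1 := by exact_mod_cast hs1R
    have hnum_pos : 0 < s.num := Rat.num_pos.mpr hs0Q
    have huv : Nat.Coprime u v := by
      have := s.reduced
      have hnatabs : s.num.natAbs = u := by rw [hu]; omega
      rwa [hnatabs] at this
    have hultv : u < v := by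
      have hlt : (s.num : ℚ) < (s.den : ℚ) := by
        have h1 : (s.num : ℚ) / (s.den : ℚ) < 1 := by rw [Rat.num_div_den]; exact hs1Q
        have h2 : (0:ℚ) < (s.den : ℚ) := by exact_mod_cast s.den_pos
        exact (div_lt_one h2).mp h1
      have hlt2 : s.num < (s.den : ℤ) := by exact_mod_cast hlt
      rw [hu, hv]
      omega
    have hsuv : s = (u:ℚ) / (v:ℚ) := by
      have h1 : ((u:ℤ):ℚ) = (s.num : ℚ) := by
        rw [hu]
        exact_mod_cast congrArg (fun z : ℤ => (z : ℚ)) (Int.toNat_of_nonneg hnum_pos.le)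
      rw [show ((u:ℚ)) = ((s.num:ℚ)) from by exact_mod_cast h1,
        show ((v:ℚ)) = ((s.den:ℚ)) from by rw [hv]]
      exact (Rat.num_div_den s).symm
    have hv0 : ((v:ℚ)) ≠ 0 := by
      have : 0 < v := s.den_pos
      positivity
    have hnatQ : ((Ep.toNat : ℚ)) ^ Kp * (v:ℚ) ^ N = (u:ℚ) ^ N * ((Eq'.toNat : ℚ)) ^ Kq := by
      rw [hQ, hsuv]
      field_simp
      rw [div_pow, mul_right_comm, div_mul_cancel₀ _ (pow_ne_zero _ hv0), mul_comm]
    have hnat : Ep.toNat ^ Kp * v ^ N = u ^ N * Eq'.toNat ^ Kq := by exact_mod_cast hnatQ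
    -- dichotomy for Eq'
    have hBdich : Eq'.toNat = 1 ∨ Nat.Prime Eq'.toNat := by
      by_cases hpp : IsPrimePow mq
      · obtain ⟨ℓ, e, hℓ, he, hme⟩ := hpp
        right
        have hℓp : Nat.Prime ℓ := hℓ.nat_prime
        haveI : Fact (Nat.Prime ℓ) := ⟨hℓp⟩
        have hmqe : mq = ℓ ^ ((e-1)+1) := by rw [← hme]; congr 1; omega
        have hval : Eq' = (ℓ : ℤ) := by
          rw [hEq', hmqe]
          exact Polynomial.eval_one_cyclotomic_prime_pow (e-1)
        have : Eq'.toNat = ℓ := by rw [hval]; omega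
        rwa [this]
      · left
        have hval : Eq' = 1 := by
          rw [hEq']
          apply Polynomial.eval_one_cyclotomic_not_prime_pow
          intro pp hppr kk hkk
          rcases Nat.eq_zero_or_pos kk with h0 | h0
          · rw [h0, pow_zero] at hkk
            omega
          · exact hpp ⟨pp, kk, Nat.prime_iff.mp hppr, h0, hkk⟩
        rw [hval]
        rfl
    obtain ⟨hφ1, hveq⟩ := endgame' N Kp Kq (Nat.totient mq) Ep.toNat Eq'.toNat u v
      hNpos hKq huv (by omega) hultv hnat hBdich
    have hmq2 : mq = 2 := by
      rcases Nat.totient_eq_one_iff.mp hφ1 with h | h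
      · omega
      · exact h
    have hEq2 : Eq' = 2 := by
      rw [hEq', hmq2, Polynomial.cyclotomic_two]
      simp
    have hv2 : v = 2 := by rw [hveq, hEq2]; rfl
    have hu1 : u = 1 := by omega
    have hs12 : s = 1/2 := by rw [hsuv, hu1, hv2]; norm_num
    -- n = 4q
    have hn4q : n = 4 * q := by
      have hdvd2q : Nat.gcd (2*q) n ∣ 2*q := Nat.gcd_dvd_left _ _
      have hdvdn : Nat.gcd (2*q) n ∣ n := Nat.gcd_dvd_right _ _
      have h2gcd : 2 * Nat.gcd (2*q) n = n := by
        have := Nat.div_mul_cancel hdvdn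
        rw [← hmqdef] at this
        rw [hmq2] at this
        omega
      have hle : Nat.gcd (2*q) n ≤ 2*q := Nat.le_of_dvd (by omega) hdvd2q
      omega
    have hq0R : ((q:ℝ)) ≠ 0 := by
      have : (0:ℕ) < q := by omega
      have : (0:ℝ) < q := by exact_mod_cast this
      linarith
    have hβval : β = Real.pi / 2 := by
      rw [hβ, hn4q]
      push_cast
      field_simp
      ring
    have hsinβ1 : Real.sin β = 1 := by rw [hβval, Real.sin_pi_div_two]
    have hsinαhalf : Real.sin α = 1/2 := by
      rw [hsβ, hsinβ1, hs12]
      norm_num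
    have hαval : α = Real.pi / 6 := by
      apply Real.injOn_sin ⟨by linarith, by linarith⟩ ⟨by linarith, by linarith⟩
      rw [hsinαhalf, Real.sin_pi_div_six]
    have h12 : (n:ℝ) = 12 * p := by
      have h6 := hαval
      rw [hα, div_eq_div_iff hn0.ne' (by norm_num : (6:ℝ) ≠ 0)] at h6
      have h7 : Real.pi * (12 * (p:ℝ)) = Real.pi * n := by linarith
      have := mul_left_cancel₀ Real.pi_ne_zero h7
      linarith
    have hn12 : n = 12 * p := by exact_mod_cast h12
    constructor
    · omega
    · omega
  · rintro ⟨hn12, hk32⟩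
    refine ⟨(1:ℚ)/2, ?_⟩
    have hj1 : ((j:ℝ) + 1) ≠ 0 := by positivity
    have hnval : (n:ℝ) = 12 * ((j:ℝ) + 1) := by
      rw [hn12]
      push_cast
      ring
    have hα6 : α = Real.pi / 6 := by
      rw [hα, hnval, hp]
      push_cast
      field_simp
      ring
    have hβ2 : β = Real.pi / 2 := by
      rw [hβ, hnval, hq, hk32]
      push_cast
      field_simp
      ring
    rw [hα6, hβ2, Real.sin_pi_div_six, Real.sin_pi_div_two]
    norm_num
end

section
/- Let k and n be positive integers with gcd(k, n) = 1. Then, inside ℂ, the field ℚ(sin(kπ/n)) generated over ℚ by sin(kπ/n) equals the field ℚ(ζ_{g(n)} + ζ_{g(n)}⁻¹) generated over ℚ by ζ_{g(n)} + ζ_{g(n)}⁻¹, i.e., ℚ(sin(kπ/n)) is the maximal real subfield of the cyclotomic field ℚ(ζ_{g(n)}). -/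
/-- `g(m) = m` if `m ≡ 2 (mod 4)`, `g(m) = 2m` if `4 ∣ m`, and `g(m) = 4m` if `m` is odd. -/
def gAux (m : ℕ) : ℕ :=
  if m % 4 = 2 then m else if m % 4 = 0 then 2 * m else 4 * m

/-- `ζ_m = exp(2πi/m)`. -/
noncomputable def zetaC (m : ℕ) : ℂ := Complex.exp (2 * Real.pi * Complex.I / m)

open IntermediateField Real

/-- Bezout solver. -/
lemma exists_dvd_mul_sub (a c M : ℤ) (h : (Int.gcd a M : ℤ) ∣ c) :
    ∃ b : ℤ, M ∣ a * b - c := by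
  obtain ⟨e, he⟩ := h
  refine ⟨Int.gcdA a M * e, ⟨-(Int.gcdB a M * e), ?_⟩⟩
  have hb := Int.gcd_eq_gcd_ab a M
  rw [he]
  linear_combination (-e) * hb

lemma odd_dvd_two_mul {d w : ℤ} (h2 : ¬ (2:ℤ) ∣ d) (h : d ∣ 2 * w) : d ∣ w := by
  have hg : Int.gcd d 2 = 1 := by
    have h1 : (Int.gcd d 2 : ℤ) ∣ 2 := Int.gcd_dvd_right _ _
    have h3 : (Int.gcd d 2 : ℤ) ∣ d := Int.gcd_dvd_left _ _
    have hdd : Int.gcd d 2 ∣ 2 := by exact_mod_cast h1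
    have h4 : Int.gcd d 2 = 1 ∨ Int.gcd d 2 = 2 := (Nat.dvd_prime Nat.prime_two).mp hdd
    rcases h4 with h4 | h4
    · exact h4
    · rw [h4] at h3; exact absurd h3 (by exact_mod_cast h2)
  have hc : IsCoprime d 2 := Int.isCoprime_iff_gcd_eq_one.mpr hg
  exact hc.dvd_of_dvd_mul_left h

/-- Chebyshev: cos of integer multiples stays in the field. -/
lemma cos_int_mul_mem (F : IntermediateField ℚ ℂ) {x : ℝ}
    (hx : ((Real.cos x : ℝ) : ℂ) ∈ F) (b : ℤ) :
    ((Real.cos (b * x) : ℝ) : ℂ) ∈ F := by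
  have key : ((Real.cos (b * x) : ℝ) : ℂ)
      = Polynomial.aeval ((Real.cos x : ℝ) : ℂ) (Polynomial.Chebyshev.T ℚ b) := by
    rw [Polynomial.Chebyshev.aeval_T, Complex.ofReal_cos, Complex.ofReal_cos,
      Polynomial.Chebyshev.T_complex_cos]
    norm_cast
  rw [key]
  have h1 : Polynomial.aeval ((Real.cos x : ℝ) : ℂ) (Polynomial.Chebyshev.T ℚ b)
      ∈ Algebra.adjoin ℚ {((Real.cos x : ℝ) : ℂ)} :=
    Polynomial.aeval_mem_adjoin_singleton ℚ _
  have h2 : Algebra.adjoin ℚ {((Real.cos x : ℝ) : ℂ)} ≤ F.toSubalgebra :=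
    Algebra.adjoin_le (Set.singleton_subset_iff.mpr hx)
  exact h2 h1

lemma cos_mem_adjoin (n : ℕ) (hn : 0 < n) (a c : ℤ)
    (h : ∃ b : ℤ, (4*(n:ℤ)) ∣ a*b - c ∨ (4*(n:ℤ)) ∣ a*b - c - 2*n) :
    ((Real.cos (c * π / (2*n)) : ℝ) : ℂ) ∈
      IntermediateField.adjoin ℚ {((Real.cos (a * π / (2*n)) : ℝ) : ℂ)} := by
  obtain ⟨b, hb⟩ := h
  set F := IntermediateField.adjoin ℚ {((Real.cos (a * π / (2*n)) : ℝ) : ℂ)} with hF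
  have hgen : ((Real.cos (a * π / (2*n)) : ℝ) : ℂ) ∈ F := by
    rw [hF]; exact IntermediateField.mem_adjoin_simple_self ℚ _
  have hmem := cos_int_mul_mem F hgen b
  have hn' : (n:ℝ) ≠ 0 := Nat.cast_ne_zero.mpr hn.ne'
  rcases hb with ⟨t, ht⟩ | ⟨t, ht⟩
  · have hR : (a:ℝ) * b = c + 4*n*t := by
      have h' : (a*b : ℤ) = c + 4*n*t := by linarith [ht]
      exact_mod_cast congrArg (Int.cast : ℤ → ℝ) h'
    have hang : (b:ℝ) * ((a:ℝ) * π / (2*n)) = (c:ℝ) * π / (2*n) + t * (2*π) := by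
      field_simp
      linear_combination hR
    rw [hang, Real.cos_add_int_mul_two_pi] at hmem
    exact hmem
  · have hR : (a:ℝ) * b = c + 2*n + 4*n*t := by
      have h' : (a*b : ℤ) = c + 2*n + 4*n*t := by linarith [ht]
      exact_mod_cast congrArg (Int.cast : ℤ → ℝ) h'
    have hang : (b:ℝ) * ((a:ℝ) * π / (2*n)) = ((c:ℝ) * π / (2*n) + π) + t * (2*π) := by
      field_simp
      linear_combination hR
    rw [hang, Real.cos_add_int_mul_two_pi, Real.cos_add_pi] at hmem
    have heq : ((Real.cos (c * π / (2*n)) : ℝ) : ℂ) = -((- Real.cos (c * π / (2*n)) : ℝ) : ℂ) := by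
      push_cast; ring
    rw [heq]
    exact F.neg_mem hmem

lemma zeta_sum (N : ℕ) :
    zetaC N + (zetaC N)⁻¹ = ((2 * Real.cos (2*π/N) : ℝ) : ℂ) := by
  have h1 : (2*(π:ℂ)*Complex.I/N) = ((2*π/N : ℝ):ℂ) * Complex.I := by
    push_cast; ring
  rw [zetaC, h1, ← Complex.exp_neg]
  have h2 : -(((2*π/N : ℝ):ℂ) * Complex.I) = -((2*π/N : ℝ):ℂ) * Complex.I := by ring
  rw [h2, ← Complex.two_cos, ← Complex.ofReal_cos]
  push_cast; ring

lemma two_mem_IF (F : IntermediateField ℚ ℂ) : (2:ℂ) ∈ F := by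
  have h := F.algebraMap_mem (2:ℚ)
  rw [map_ofNat] at h
  exact h

lemma adjoin_two_mul (x : ℂ) :
    IntermediateField.adjoin ℚ {(2*x : ℂ)} = IntermediateField.adjoin ℚ {x} := by
  apply le_antisymm
  · rw [IntermediateField.adjoin_le_iff, Set.singleton_subset_iff]
    exact (IntermediateField.adjoin ℚ {x}).mul_mem (two_mem_IF _)
      (IntermediateField.mem_adjoin_simple_self ℚ x)
  · rw [IntermediateField.adjoin_le_iff, Set.singleton_subset_iff]
    have h2 : (2:ℂ)⁻¹ * (2*x) ∈ IntermediateField.adjoin ℚ {(2*x : ℂ)} :=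
      (IntermediateField.adjoin ℚ {(2*x:ℂ)}).mul_mem
        ((IntermediateField.adjoin ℚ {(2*x:ℂ)}).inv_mem (two_mem_IF _))
        (IntermediateField.mem_adjoin_simple_self ℚ (2*x))
    have h3 : (2:ℂ)⁻¹ * (2*x) = x := by ring
    rwa [h3] at h2

/-- For coprime positive integers `k` and `n`, the field `ℚ(sin(kπ/n)) ⊆ ℂ` equals
`ℚ(ζ_{g(n)} + ζ_{g(n)}⁻¹)`, the maximal real subfield of `ℚ(ζ_{g(n)})`. -/
theorem adjoin_sin_eq_maximal_real_subfield (k n : ℕ) (hk : 0 < k) (hn : 0 < n)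
    (hcop : Nat.gcd k n = 1) :
    IntermediateField.adjoin ℚ {((Real.sin (k * Real.pi / n) : ℝ) : ℂ)} =
      IntermediateField.adjoin ℚ {zetaC (gAux n) + (zetaC (gAux n))⁻¹} := by
  have hnR : (n:ℝ) ≠ 0 := Nat.cast_ne_zero.mpr hn.ne'
  set a : ℤ := (n:ℤ) - 2*k with ha
  have hsin : Real.sin (k*π/n) = Real.cos ((a:ℝ) * π/(2*n)) := by
    rw [← Real.cos_pi_div_two_sub]
    congr 1
    rw [ha]
    push_cast
    field_simp
  obtain ⟨c, hNc, h1, h2⟩ :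
      ∃ c : ℤ, ((gAux n : ℤ)) * c = 4*n ∧
        (∃ b : ℤ, (4*(n:ℤ)) ∣ a*b - c ∨ (4*(n:ℤ)) ∣ a*b - c - 2*n) ∧
        (∃ b : ℤ, (4*(n:ℤ)) ∣ c*b - a ∨ (4*(n:ℤ)) ∣ c*b - a - 2*n) := by
    by_cases hn2 : n % 4 = 2
    · -- `g(n) = n`, `c = 4`
      have hk2 : k % 2 = 1 := by
        by_contra h
        have hd2 : 2 ∣ k := by omega
        have hd3 : 2 ∣ n := by omega
        have := Nat.dvd_gcd hd2 hd3
        omega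
      set m := n / 2 with hm
      have hnm : n = 2*m := by omega
      have hmodd : m % 2 = 1 := by omega
      refine ⟨4, by simp only [gAux, if_pos hn2]; push_cast; ring, ?_, ?_⟩
      · have hside : (Int.gcd a (4*(n:ℤ)) : ℤ) ∣ 4 + 2*(n:ℤ) := by
          set d : ℤ := (Int.gcd a (4*(n:ℤ)) : ℤ) with hd
          have hda : d ∣ a := Int.gcd_dvd_left _ _
          have hdn : d ∣ 4*(n:ℤ) := Int.gcd_dvd_right _ _
          set e : ℤ := (Int.gcd d (m:ℤ) : ℤ) with he
          have hed : e ∣ d := Int.gcd_dvd_left _ _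
          have hem : e ∣ (m:ℤ) := Int.gcd_dvd_right _ _
          have hea : e ∣ a := hed.trans hda
          have he2 : ¬ (2:ℤ) ∣ e := by
            intro h
            have h2m : (2:ℤ) ∣ (m:ℤ) := h.trans hem
            have : 2 ∣ m := by exact_mod_cast h2m
            omega
          have hek : e ∣ (k:ℤ) := by
            apply odd_dvd_two_mul he2
            rw [show (2:ℤ)*(k:ℤ) = 2*(m:ℤ) - a by rw [ha]; push_cast [hnm]; ring]
            exact dvd_sub (Dvd.dvd.mul_left hem 2) hea
          have hen : e ∣ (n:ℤ) := by
            rw [show ((n:ℤ)) = 2*(m:ℤ) by push_cast [hnm]; ring]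
            exact Dvd.dvd.mul_left hem 2
          have he1 : e ∣ 1 := by
            have hg := Int.dvd_coe_gcd hek hen
            rwa [Int.gcd_natCast_natCast, hcop, Nat.cast_one] at hg
          have hcopdm : IsCoprime d (m:ℤ) := by
            rw [Int.isCoprime_iff_gcd_eq_one]
            rw [he] at he1
            exact Nat.dvd_one.mp (by exact_mod_cast he1)
          have hd8 : d ∣ 8 := by
            apply hcopdm.dvd_of_dvd_mul_right
            rw [show (8:ℤ)*(m:ℤ) = 4*(n:ℤ) by push_cast [hnm]; ring]
            exact hdn
          exact hd8.trans (by omega : (8:ℤ) ∣ 4 + 2*(n:ℤ))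
        obtain ⟨b, hb⟩ := exists_dvd_mul_sub a (4 + 2*(n:ℤ)) (4*(n:ℤ)) hside
        exact ⟨b, Or.inr (by rw [show a*b - 4 - 2*(n:ℤ) = a*b - (4+2*(n:ℤ)) by ring]; exact hb)⟩
      · refine ⟨a/4, Or.inl ?_⟩
        have hz : 4*(a/4) - a = 0 := by omega
        rw [hz]
        exact dvd_zero _
    · by_cases hn0 : n % 4 = 0
      · -- `g(n) = 2n`, `c = 2`
        have hk2 : k % 2 = 1 := by
          by_contra h
          have hd2 : 2 ∣ k := by omega
          have hd3 : 2 ∣ n := by omega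
          have := Nat.dvd_gcd hd2 hd3
          omega
        set q := n / 2 with hq
        have hnq : n = 2*q := by omega
        have hqeven : q % 2 = 0 := by omega
        obtain ⟨a₁, ha1⟩ : ∃ t : ℤ, a = 2*t := ⟨a/2, by omega⟩
        have ha1odd : ¬ (2:ℤ) ∣ a₁ := by omega
        refine ⟨2, by simp only [gAux, if_neg hn2, if_pos hn0]; push_cast; ring, ?_, ?_⟩
        · have hside : (Int.gcd a (4*(n:ℤ)) : ℤ) ∣ 2 := by
            have hgcdeq : (Int.gcd a (4*(n:ℤ)) : ℤ) = 2 * (Int.gcd a₁ (2*(n:ℤ)) : ℤ) := by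
              rw [ha1, show 4*(n:ℤ) = 2*(2*(n:ℤ)) by ring, Int.gcd_mul_left]
              push_cast
              ring
            set e : ℤ := (Int.gcd a₁ (2*(n:ℤ)) : ℤ) with he
            have hea : e ∣ a₁ := Int.gcd_dvd_left _ _
            have hen2 : e ∣ 2*(n:ℤ) := Int.gcd_dvd_right _ _
            have he2 : ¬ (2:ℤ) ∣ e := fun h => ha1odd (h.trans hea)
            have hen : e ∣ (n:ℤ) := odd_dvd_two_mul he2 hen2
            have heq' : e ∣ (q:ℤ) := by
              apply odd_dvd_two_mul he2
              rw [show (2:ℤ)*(q:ℤ) = (n:ℤ) by push_cast [hnq]; ring]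
              exact hen
            have hek : e ∣ (k:ℤ) := by
              rw [show ((k:ℤ)) = (q:ℤ) - a₁ by omega]
              exact dvd_sub heq' hea
            have he1 : e ∣ 1 := by
              have hg := Int.dvd_coe_gcd hek hen
              rwa [Int.gcd_natCast_natCast, hcop, Nat.cast_one] at hg
            have hnat : Int.gcd a₁ (2*(n:ℤ)) = 1 := by
              rw [he] at he1
              exact Nat.dvd_one.mp (by exact_mod_cast he1)
            rw [hgcdeq, he, hnat]
            norm_num
          obtain ⟨b, hb⟩ := exists_dvd_mul_sub a 2 (4*(n:ℤ)) hside
          exact ⟨b, Or.inl hb⟩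
        · refine ⟨a₁, Or.inl ?_⟩
          rw [show 2*a₁ - a = 0 by omega]
          exact dvd_zero _
      · -- `n` odd, `g(n) = 4n`, `c = 1`
        have hnodd : n % 2 = 1 := by omega
        refine ⟨1, by simp only [gAux, if_neg hn2, if_neg hn0]; push_cast; ring, ?_, ?_⟩
        · have hside : (Int.gcd a (4*(n:ℤ)) : ℤ) ∣ 1 := by
            set d : ℤ := (Int.gcd a (4*(n:ℤ)) : ℤ) with hd
            have hda : d ∣ a := Int.gcd_dvd_left _ _
            have hdn4 : d ∣ 4*(n:ℤ) := Int.gcd_dvd_right _ _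
            have hd2 : ¬ (2:ℤ) ∣ d := by
              intro h
              have h2a : (2:ℤ) ∣ a := h.trans hda
              omega
            have hdn : d ∣ (n:ℤ) := by
              apply odd_dvd_two_mul hd2
              apply odd_dvd_two_mul hd2
              rw [show (2:ℤ)*(2*(n:ℤ)) = 4*(n:ℤ) by ring]
              exact hdn4
            have hdk : d ∣ (k:ℤ) := by
              apply odd_dvd_two_mul hd2
              rw [show (2:ℤ)*(k:ℤ) = (n:ℤ) - a by omega]
              exact dvd_sub hdn hda
            have hg := Int.dvd_coe_gcd hdk hdn
            rwa [Int.gcd_natCast_natCast, hcop, Nat.cast_one] at hg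
          obtain ⟨b, hb⟩ := exists_dvd_mul_sub a 1 (4*(n:ℤ)) hside
          exact ⟨b, Or.inl hb⟩
        · refine ⟨a, Or.inl ?_⟩
          rw [show 1*a - a = 0 by ring]
          exact dvd_zero _
  have hNpos : 0 < gAux n := by
    unfold gAux; split_ifs <;> omega
  have hNR : ((gAux n : ℕ) : ℝ) ≠ 0 := Nat.cast_ne_zero.mpr hNpos.ne'
  have harg : 2*π/((gAux n : ℕ) : ℝ) = (c:ℝ)*π/(2*n) := by
    have hc : ((gAux n : ℕ) : ℝ) * (c:ℝ) = 4*n := by exact_mod_cast hNc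
    field_simp
    linear_combination (-1) * hc
  have hrhs : zetaC (gAux n) + (zetaC (gAux n))⁻¹
      = 2 * ((Real.cos ((c:ℝ)*π/(2*n)) : ℝ) : ℂ) := by
    rw [zeta_sum, harg]
    push_cast
    ring
  rw [show ((Real.sin (↑k*π/↑n) : ℝ) : ℂ) = ((Real.cos ((a:ℝ)*π/(2*n)) : ℝ) : ℂ) from by
    rw [hsin], hrhs, adjoin_two_mul]
  apply le_antisymm
  · rw [IntermediateField.adjoin_le_iff, Set.singleton_subset_iff]
    exact cos_mem_adjoin n hn c a h2
  · rw [IntermediateField.adjoin_le_iff, Set.singleton_subset_iff]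
    exact cos_mem_adjoin n hn a c h1
end

section
/- Let k and n be coprime positive integers with n ≥ 3. Then the degree over ℚ of the field ℚ(sin(kπ/n)) generated by the real algebraic number sin(kπ/n) equals φ(g(n))/2, where φ is Euler's totient function. -/
open IntermediateField Polynomial

set_option maxHeartbeats 1000000
set_option synthInstance.maxHeartbeats 400000

lemma coprime_two_of_odd {m : ℕ} (h : m % 2 = 1) : Nat.Coprime m 2 :=
  Nat.coprime_comm.1 ((Nat.prime_two.coprime_iff_not_dvd).2 (by omega))

lemma arith_aux (k n : ℕ) (hn : 3 ≤ n) (hcop : Nat.Coprime k n) :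
    3 ≤ 4 * n / Nat.gcd (n + 2 * k) (4 * n) ∧
      (4 * n / Nat.gcd (n + 2 * k) (4 * n)).totient = (gAux n).totient := by
  have hcop1 : Nat.gcd k n = 1 := hcop
  rcases Nat.even_or_odd n with hne | hno
  · -- n even: k is odd
    obtain ⟨n', hn'⟩ := hne
    have h2n : 2 ∣ n := ⟨n', by omega⟩
    have hkodd : k % 2 = 1 := by
      rcases Nat.even_or_odd k with ⟨c, hc⟩ | hk
      · exfalso
        have h2 : (2 : ℕ) ∣ Nat.gcd k n := Nat.dvd_gcd ⟨c, by omega⟩ h2n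
        omega
      · exact Nat.odd_iff.1 hk
    have h04 : n % 4 = 0 ∨ n % 4 = 2 := by omega
    rcases h04 with hn4 | hn4
    · -- n ≡ 0 mod 4
      obtain ⟨t, ht⟩ : ∃ t, n = 4 * t := ⟨n / 4, by omega⟩
      have hu : n + 2 * k = 2 * (k + 2 * t) := by omega
      have h4n : 4 * n = 2 * (2 * (4 * t)) := by omega
      have hu2 : Nat.Coprime (k + 2 * t) 2 := coprime_two_of_odd (by omega)
      have hukt : Nat.Coprime (k + 2 * t) t := by
        have h := (Nat.coprime_add_mul_left_left k t 2).2 (hcop.coprime_dvd_right ⟨4, by omega⟩)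
        exact (by omega : k + t * 2 = k + 2 * t) ▸ h
      have hu4 : Nat.Coprime (k + 2 * t) 4 := by
        have := hu2.pow_right 2; simpa using this
      have hun : Nat.Coprime (k + 2 * t) (2 * (4 * t)) :=
        Nat.Coprime.mul_right hu2 (Nat.Coprime.mul_right hu4 hukt)
      have hd : Nat.gcd (n + 2 * k) (4 * n) = 2 * 1 := by
        rw [hu, h4n, Nat.gcd_mul_left, hun]
      rw [hd]
      have hm : 4 * n / (2 * 1) = 2 * n := by omega
      rw [hm]
      have hg : gAux n = 2 * n := by unfold gAux; rw [if_neg (by omega), if_pos hn4]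
      rw [hg]
      exact ⟨by omega, rfl⟩
    · -- n ≡ 2 mod 4
      obtain ⟨t, ht⟩ : ∃ t, n = 2 * t := ⟨n / 2, by omega⟩
      have htodd : t % 2 = 1 := by omega
      obtain ⟨s, hs⟩ : ∃ s, t + k = 2 * s := ⟨(t + k) / 2, by omega⟩
      have ha : n + 2 * k = 4 * s := by omega
      have h4n : 4 * n = 4 * (2 * t) := by omega
      have hkt : Nat.Coprime k t := hcop.coprime_dvd_right ⟨2, by omega⟩
      have h2st : Nat.Coprime (2 * s) t := by
        have h := (Nat.coprime_add_self_left (m := k) (n := t)).2 hkt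
        exact (by omega : k + t = 2 * s) ▸ h
      have hst : Nat.Coprime s t := Nat.Coprime.coprime_dvd_left ⟨2, by omega⟩ h2st
      have hg : gAux n = n := by unfold gAux; rw [if_pos hn4]
      rcases Nat.even_or_odd s with ⟨s', hs'⟩ | hso
      · -- s even
        have hs2 : s = 2 * s' := by omega
        have h1 : Nat.gcd s' t = 1 := hst.coprime_dvd_left ⟨2, by omega⟩
        have hss : Nat.gcd s (2 * t) = 2 * 1 := by
          rw [hs2, Nat.gcd_mul_left, h1]
        have hd : Nat.gcd (n + 2 * k) (4 * n) = 4 * (2 * 1) := by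
          rw [ha, h4n, Nat.gcd_mul_left, hss]
        rw [hd]
        have hm : 4 * n / (4 * (2 * 1)) = t := by omega
        rw [hm, hg]
        refine ⟨by omega, ?_⟩
        have h2t : Nat.Coprime 2 t := Nat.coprime_comm.1 (coprime_two_of_odd htodd)
        rw [ht, Nat.totient_mul h2t, Nat.totient_two, one_mul]
      · -- s odd
        have hs2 : Nat.Coprime s 2 := coprime_two_of_odd (Nat.odd_iff.1 hso)
        have hss : Nat.Coprime s (2 * t) := Nat.Coprime.mul_right hs2 hst
        have hd : Nat.gcd (n + 2 * k) (4 * n) = 4 * 1 := by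
          rw [ha, h4n, Nat.gcd_mul_left, hss]
        rw [hd]
        have hm : 4 * n / (4 * 1) = n := by omega
        rw [hm, hg]
        exact ⟨by omega, rfl⟩
  · -- n odd
    have hnodd := Nat.odd_iff.1 hno
    have h2 : Nat.Coprime (n + 2 * k) 2 := coprime_two_of_odd (by omega)
    have h4 : Nat.Coprime (n + 2 * k) 4 := by
      have := h2.pow_right 2; simpa using this
    have hnn : Nat.Coprime (n + 2 * k) n := by
      have h2kn : Nat.Coprime (2 * k) n :=
        Nat.coprime_mul_iff_left.2 ⟨Nat.coprime_comm.1 (coprime_two_of_odd hnodd), hcop⟩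
      have h := (Nat.coprime_add_self_left (m := 2 * k) (n := n)).2 h2kn
      exact (by omega : 2 * k + n = n + 2 * k) ▸ h
    have hd : Nat.gcd (n + 2 * k) (4 * n) = 1 := Nat.Coprime.mul_right h4 hnn
    rw [hd]
    have hm : 4 * n / 1 = 4 * n := by omega
    rw [hm]
    have hg : gAux n = 4 * n := by unfold gAux; rw [if_neg (by omega), if_neg (by omega)]
    rw [hg]
    exact ⟨by omega, rfl⟩

noncomputable def realIF : IntermediateField ℚ ℂ :=
  (Complex.ofRealAm.restrictScalars ℚ).fieldRange

lemma mem_realIF_im_eq_zero {z : ℂ} (hz : z ∈ realIF) : z.im = 0 := by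
  obtain ⟨r, hr⟩ := hz
  rw [← hr]
  exact Complex.ofReal_im r

lemma two_mul_finrank_adjoin (s : ℝ) (m : ℕ) (hm : 3 ≤ m) (ξ : ℂ)
    (hξ : IsPrimitiveRoot ξ m)
    (hconj : (starRingEnd ℂ) ξ = ξ⁻¹)
    (hsum : ξ + ξ⁻¹ = -(2 * (s : ℂ))) :
    2 * Module.finrank ℚ (adjoin ℚ {s} : IntermediateField ℚ ℝ) = Nat.totient m := by
  have hm0 : 0 < m := by omega
  have hξ0 : ξ ≠ 0 := hξ.ne_zero (by omega)
  have hξint : IsIntegral ℚ ξ := (hξ.isIntegral hm0).tower_top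
  set E : IntermediateField ℚ ℂ := ℚ⟮ξ⟯ with hE
  have hfinE : FiniteDimensional ℚ E := adjoin.finiteDimensional hξint
  -- degree of E
  have hdegE : Module.finrank ℚ E = Nat.totient m := by
    rw [hE, adjoin.finrank hξint, ← Polynomial.cyclotomic_eq_minpoly_rat hξ hm0,
      Polynomial.natDegree_cyclotomic]
  -- s ∈ E
  have hsval : (s : ℂ) = -(ξ + ξ⁻¹) / 2 := by rw [hsum]; ring
  have hsE : (s : ℂ) ∈ E := by
    rw [hsval]
    have h1 : ξ ∈ E := mem_adjoin_simple_self ℚ ξ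
    exact div_mem (neg_mem (add_mem h1 (inv_mem h1))) (ofNat_mem E 2)
  set F : IntermediateField ℚ ℂ := ℚ⟮(s : ℂ)⟯ with hF
  have hFE : F ≤ E := by
    rw [hF]
    exact adjoin_le_iff.2 (Set.singleton_subset_iff.2 hsE)
  have hFreal : F ≤ realIF := by
    rw [hF]
    exact adjoin_le_iff.2 (Set.singleton_subset_iff.2 ⟨s, rfl⟩)
  -- ξ is not real
  have hξim : ξ.im ≠ 0 := by
    intro h
    have h1 : (starRingEnd ℂ) ξ = ξ := Complex.conj_eq_iff_im.2 h
    have h2 : ξ ^ 2 = 1 := by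
      rw [pow_two]
      nth_rewrite 1 [← h1]
      rw [hconj, inv_mul_cancel₀ hξ0]
    have := Nat.le_of_dvd (by norm_num) (hξ.dvd_of_pow_eq_one 2 h2)
    omega
  have hξF : IsIntegral F ξ := hξint.tower_top
  have hsF : (s : ℂ) ∈ F := mem_adjoin_simple_self ℚ ((s : ℂ))
  set sF : F := ⟨(s : ℂ), hsF⟩ with hsFdef
  have hdeg2 : (minpoly F ξ).natDegree = 2 := by
    have hroot : Polynomial.aeval ξ (C 1 * X ^ 2 + C (2 * sF) * X + C 1 : Polynomial F) = 0 := by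
      have h1 : ξ * ξ⁻¹ = 1 := mul_inv_cancel₀ hξ0
      have key : ξ ^ 2 + 2 * (s : ℂ) * ξ + 1 = 0 := by
        linear_combination ξ * hsum - h1
      simp only [map_add, map_mul, map_pow, aeval_X, aeval_C, map_one]
      have h2c : (algebraMap F ℂ) 2 = 2 := map_ofNat _ 2
      have hsc : (algebraMap F ℂ) sF = (s : ℂ) := rfl
      rw [h2c, hsc]
      linear_combination key
    have hPdeg : (C 1 * X ^ 2 + C (2 * sF) * X + C 1 : Polynomial F).natDegree = 2 :=
      natDegree_quadratic one_ne_zero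
    have hP0 : (C 1 * X ^ 2 + C (2 * sF) * X + C 1 : Polynomial F) ≠ 0 :=
      fun h => by rw [h] at hPdeg; simp at hPdeg
    have hle : (minpoly F ξ).natDegree ≤ 2 :=
      hPdeg ▸ natDegree_le_of_dvd (minpoly.dvd F ξ hroot) hP0
    have hpos : 0 < (minpoly F ξ).natDegree := minpoly.natDegree_pos hξF
    have hne1 : (minpoly F ξ).natDegree ≠ 1 := by
      intro h
      have hmem : ξ ∈ (algebraMap F ℂ).range := (minpoly.natDegree_eq_one_iff).1 h
      obtain ⟨y, hy⟩ := hmem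
      have : ξ ∈ realIF := by
        rw [← hy]
        exact hFreal y.2
      exact hξim (mem_realIF_im_eq_zero this)
    omega
  -- [E : F] = 2
  have hext : extendScalars hFE = F⟮ξ⟯ := extendScalars_adjoin hFE
  have hrel : relfinrank F E = 2 := by
    rw [relfinrank_eq_finrank_of_le hFE, hext, adjoin.finrank hξF, hdeg2]
  have htower := finrank_bot_mul_relfinrank hFE
  rw [hrel, hdegE] at htower
  -- transfer from ℝ to ℂ
  have hsCint : IsIntegral ℚ ((s : ℂ)) := by
    have h1 : IsIntegral ℚ (⟨(s : ℂ), hsE⟩ : E) := IsIntegral.of_finite ℚ _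
    have := h1.map (IsScalarTower.toAlgHom ℚ E ℂ)
    simpa using this
  have hsint : IsIntegral ℚ s := by
    have h2 := hsCint
    rwa [show ((s : ℂ)) = algebraMap ℝ ℂ s from rfl,
      isIntegral_algebraMap_iff (algebraMap ℝ ℂ).injective] at h2
  have hreal : Module.finrank ℚ (adjoin ℚ {s} : IntermediateField ℚ ℝ) =
      Module.finrank ℚ F := by
    have e1 : Module.finrank ℚ (adjoin ℚ {s} : IntermediateField ℚ ℝ) =
        (minpoly ℚ s).natDegree := adjoin.finrank hsint
    have e2 : Module.finrank ℚ F = (minpoly ℚ ((s : ℂ))).natDegree := by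
      rw [hF]; exact adjoin.finrank hsCint
    rw [e1, e2, show ((s : ℂ)) = algebraMap ℝ ℂ s from rfl,
      minpoly.algebraMap_eq (algebraMap ℝ ℂ).injective]
  rw [hreal]
  omega

/-- For coprime positive integers `k` and `n` with `n ≥ 3`, the degree of
`ℚ(sin(kπ/n))` over `ℚ` is `φ(g(n))/2`. -/
theorem finrank_adjoin_sin (k n : ℕ) (hk : 0 < k) (hn : 3 ≤ n)
    (hcop : Nat.gcd k n = 1) :
    Module.finrank ℚ
        (IntermediateField.adjoin ℚ {Real.sin (k * Real.pi / n)} : IntermediateField ℚ ℝ) =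
      Nat.totient (gAux n) / 2 := by
  have hcop' : Nat.Coprime k n := hcop
  set a := n + 2 * k with ha
  set d := Nat.gcd a (4 * n) with hd
  set m := 4 * n / d with hm
  set b := a / d with hb
  obtain ⟨hm3, htot⟩ := arith_aux k n hn hcop'
  rw [← hd, ← hm] at hm3 htot
  have hdpos : 0 < d := Nat.gcd_pos_of_pos_right _ (by omega)
  have hm0 : m ≠ 0 := by omega
  have hbm : Nat.Coprime b m := Nat.coprime_div_gcd_div_gcd hdpos
  set ξ : ℂ := Complex.exp (2 * Real.pi * Complex.I * (b / m)) with hξ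
  have hprim : IsPrimitiveRoot ξ m := Complex.isPrimitiveRoot_exp_of_coprime b m hm0 hbm
  -- the exponent as a real multiple of I
  set θ : ℝ := k * Real.pi / n + Real.pi / 2 with hθ
  have hnat : b * (4 * n) = a * m := by
    have h1 : d ∣ a := Nat.gcd_dvd_left _ _
    have h2 : d ∣ 4 * n := Nat.gcd_dvd_right _ _
    obtain ⟨a', ha'⟩ := h1
    obtain ⟨c', hc'⟩ := h2
    rw [hb, hm, ha', hc', Nat.mul_div_cancel_left _ hdpos, Nat.mul_div_cancel_left _ hdpos]
    ring
  have hn0 : (n : ℝ) ≠ 0 := by positivity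
  have hexp : 2 * Real.pi * Complex.I * (b / m) = (θ : ℝ) * Complex.I := by
    have hmC : (m : ℂ) ≠ 0 := by exact_mod_cast hm0
    have hnC : (n : ℂ) ≠ 0 := by exact_mod_cast (by omega : n ≠ 0)
    have hfrac : (b : ℂ) / (m : ℂ) = (a : ℂ) / ((4 * n : ℕ) : ℂ) := by
      rw [div_eq_div_iff hmC (by exact_mod_cast (by omega : (4 * n : ℕ) ≠ 0))]
      exact_mod_cast hnat
    rw [hfrac, hθ, ha]
    push_cast
    field_simp
    ring
  have hconj : (starRingEnd ℂ) ξ = ξ⁻¹ := by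
    rw [hξ, hexp, ← Complex.exp_conj, ← Complex.exp_neg]
    congr 1
    simp [Complex.conj_ofReal]
  have hsum : ξ + ξ⁻¹ = -(2 * ((Real.sin (k * Real.pi / n) : ℝ) : ℂ)) := by
    rw [hξ, hexp, ← Complex.exp_neg, ← neg_mul, ← Complex.two_cos, ← Complex.ofReal_cos, hθ,
      Real.cos_add_pi_div_two]
    push_cast
    ring
  have key := two_mul_finrank_adjoin (Real.sin (k * Real.pi / n)) m hm3 ξ hprim hconj hsum
  rw [htot] at key
  omega
end
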